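/- arXiv:1605.08462 — 10 statements merged into one kernel-verified Lean document; each statement's English description precedes it below -/
import Mathlib

section
/- (Beurling's criterion) Let 1 < p < ∞ and ρ ∈ Adm(Γ). Suppose there is a subfamily Γ̃ ⊆ Γ with ℓ_ρ(γ) = 1 for all γ ∈ Γ̃, such that whenever h : E → ℝ satisfies ∑_e N(γ,e)h(e) ≥ 0 for all γ ∈ Γ̃, it holds that ∑_e h(e)ρ(e)^{p-1}σ(e) ≥ 0. Then ρ is extremal, i.e., E_{p,σ}(ρ) ≤ E_{p,σ}(ρ̃) for every ρ̃ ∈ Adm(Γ). -/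
/-- The `p`-energy of a density `ρ` with edge weights `σ`. -/
noncomputable def energy {E : Type*} [Fintype E] (σ : E → ℝ) (p : ℝ) (ρ : E → ℝ) : ℝ :=
  ∑ e, σ e * |ρ e| ^ p

/-- Admissible densities for a family `Γ` of usage vectors. -/
def Adm {E : Type*} [Fintype E] (Γ : Set (E → ℝ)) : Set (E → ℝ) :=
  {ρ | (∀ e, 0 ≤ ρ e) ∧ ∀ γ ∈ Γ, 1 ≤ ∑ e, γ e * ρ e}

/-- Beurling's criterion: if `ρ ∈ Adm(Γ)` and there is `Γ̃ ⊆ Γ` with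
`ℓ_ρ(γ) = 1` on `Γ̃` such that `N(Γ̃)h ≥ 0` implies `∑ h ρ^{p-1} σ ≥ 0`, then `ρ` is
extremal. -/
theorem stmt3 {E : Type*} [Fintype E] (σ : E → ℝ) (hσ : ∀ e, 0 < σ e)
    (p : ℝ) (hp : 1 < p)
    (Γ : Set (E → ℝ)) (hΓ : ∀ γ ∈ Γ, (∀ e, 0 ≤ γ e) ∧ γ ≠ 0)
    (ρ : E → ℝ) (hρ : ρ ∈ Adm Γ)
    (Γt : Set (E → ℝ)) (hsub : Γt ⊆ Γ)
    (hlen : ∀ γ ∈ Γt, ∑ e, γ e * ρ e = 1)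
    (hbeurling : ∀ h : E → ℝ, (∀ γ ∈ Γt, 0 ≤ ∑ e, γ e * h e) →
      0 ≤ ∑ e, h e * ρ e ^ (p - 1) * σ e) :
    ∀ ρ' ∈ Adm Γ, energy σ p ρ ≤ energy σ p ρ' := by
  intro ρ' hρ'
  obtain ⟨hρ0, hρΓ⟩ := hρ
  obtain ⟨hρ'0, hρ'Γ⟩ := hρ'
  have hp0 : (0 : ℝ) < p := lt_trans one_pos hp
  set q : ℝ := p / (p - 1) with hq
  have hpq : p.HolderConjugate q := Real.HolderConjugate.conjExponent hp
  -- rewrite energies without absolute values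
  have hEρ : energy σ p ρ = ∑ e, σ e * ρ e ^ p := by
    unfold energy; exact Finset.sum_congr rfl fun e _ => by rw [abs_of_nonneg (hρ0 e)]
  have hEρ' : energy σ p ρ' = ∑ e, σ e * ρ' e ^ p := by
    unfold energy; exact Finset.sum_congr rfl fun e _ => by rw [abs_of_nonneg (hρ'0 e)]
  -- pointwise: ρ e ^ p = ρ e * ρ e ^ (p-1)
  have hpt : ∀ e, ρ e ^ p = ρ e * ρ e ^ (p - 1) := by
    intro e
    have : ρ e ^ p = ρ e ^ ((1 : ℝ) + (p - 1)) := by ring_nf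
    rw [this, Real.rpow_add_of_nonneg (hρ0 e) zero_le_one (by linarith), Real.rpow_one]
  -- Step 1: E(ρ) ≤ ∑ ρ' ρ^{p-1} σ
  have key : ∑ e, ρ e * ρ e ^ (p - 1) * σ e ≤ ∑ e, ρ' e * ρ e ^ (p - 1) * σ e := by
    have h0 := hbeurling (fun e => ρ' e - ρ e) ?_
    · have heq : ∑ e, (ρ' e - ρ e) * ρ e ^ (p - 1) * σ e
          = ∑ e, ρ' e * ρ e ^ (p - 1) * σ e - ∑ e, ρ e * ρ e ^ (p - 1) * σ e := by
        rw [← Finset.sum_sub_distrib]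
        exact Finset.sum_congr rfl fun e _ => by ring
      rw [heq] at h0; linarith
    · intro γ hγ
      have heq : ∑ e, γ e * (ρ' e - ρ e) = (∑ e, γ e * ρ' e) - ∑ e, γ e * ρ e := by
        rw [← Finset.sum_sub_distrib]
        exact Finset.sum_congr rfl fun e _ => by ring
      rw [heq, hlen γ hγ]
      linarith [hρ'Γ γ (hsub hγ)]
  -- Step 2 (Young): ρ' e * ρ e^{p-1} ≤ ρ' e ^ p / p + ρ e ^ p / q
  have young : ∀ e, ρ' e * ρ e ^ (p - 1) ≤ ρ' e ^ p / p + ρ e ^ p / q := by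
    intro e
    have h := Real.young_inequality_of_nonneg (hρ'0 e)
      (Real.rpow_nonneg (hρ0 e) (p - 1)) hpq
    have hrw : (ρ e ^ (p - 1)) ^ q = ρ e ^ p := by
      rw [← Real.rpow_mul (hρ0 e), hpq.sub_one_mul_conj]
    rw [hrw] at h
    exact h
  -- combine
  have sum_young : ∑ e, ρ' e * ρ e ^ (p - 1) * σ e
      ≤ energy σ p ρ' / p + energy σ p ρ / q := by
    have : ∑ e, ρ' e * ρ e ^ (p - 1) * σ e
        ≤ ∑ e, (σ e * ρ' e ^ p / p + σ e * ρ e ^ p / q) := by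
      apply Finset.sum_le_sum
      intro e _
      have := mul_le_mul_of_nonneg_right (young e) (hσ e).le
      calc ρ' e * ρ e ^ (p - 1) * σ e = (ρ' e * ρ e ^ (p - 1)) * σ e := by ring
        _ ≤ (ρ' e ^ p / p + ρ e ^ p / q) * σ e := this
        _ = σ e * ρ' e ^ p / p + σ e * ρ e ^ p / q := by ring
    rw [Finset.sum_add_distrib, ← Finset.sum_div, ← Finset.sum_div] at this
    rw [hEρ, hEρ']
    exact this
  have hEρ2 : energy σ p ρ = ∑ e, ρ e * ρ e ^ (p - 1) * σ e := by
    rw [hEρ]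
    exact Finset.sum_congr rfl fun e _ => by rw [hpt e]; ring
  have main : energy σ p ρ ≤ energy σ p ρ' / p + energy σ p ρ / q :=
    calc energy σ p ρ = ∑ e, ρ e * ρ e ^ (p - 1) * σ e := hEρ2
      _ ≤ ∑ e, ρ' e * ρ e ^ (p - 1) * σ e := key
      _ ≤ energy σ p ρ' / p + energy σ p ρ / q := sum_young
  have hq1 : 1 / p + 1 / q = 1 := by
    have := hpq.inv_add_inv_eq_one
    rw [one_div, one_div]; exact this
  have hppos : 0 < 1 / p := by positivity
  have h1 : energy σ p ρ * (1 / p) ≤ energy σ p ρ' * (1 / p) := by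
    have he : (1 : ℝ) / p = 1 - 1 / q := by linarith
    calc energy σ p ρ * (1 / p) = energy σ p ρ - energy σ p ρ / q := by rw [he]; ring
      _ ≤ energy σ p ρ' / p := by linarith
      _ = energy σ p ρ' * (1 / p) := by ring
  exact le_of_mul_le_mul_right h1 hppos
end

section
/- Under the hypotheses of Beurling's criterion with subfamily Γ̃, one moreover has Mod_{p,σ}(Γ̃) = Mod_{p,σ}(Γ). -/
open scoped ENNReal

/-- The `p`-modulus of a family `Γ`. -/
noncomputable def pMod {E : Type*} [Fintype E] (σ : E → ℝ) (p : ℝ) (Γ : Set (E → ℝ)) : ℝ≥0∞ :=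
  ⨅ ρ ∈ Adm Γ, ENNReal.ofReal (energy σ p ρ)

/-- under the hypotheses of Beurling's criterion with subfamily `Γ̃`,
one has `Mod_{p,σ}(Γ̃) = Mod_{p,σ}(Γ)`. -/
theorem stmt4 {E : Type*} [Fintype E] (σ : E → ℝ) (hσ : ∀ e, 0 < σ e)
    (p : ℝ) (hp : 1 < p)
    (Γ : Set (E → ℝ)) (hΓ : ∀ γ ∈ Γ, (∀ e, 0 ≤ γ e) ∧ γ ≠ 0)
    (ρ : E → ℝ) (hρ : ρ ∈ Adm Γ)
    (Γt : Set (E → ℝ)) (hsub : Γt ⊆ Γ)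
    (hlen : ∀ γ ∈ Γt, ∑ e, γ e * ρ e = 1)
    (hbeurling : ∀ h : E → ℝ, (∀ γ ∈ Γt, 0 ≤ ∑ e, γ e * h e) →
      0 ≤ ∑ e, h e * ρ e ^ (p - 1) * σ e) :
    pMod σ p Γt = pMod σ p Γ := by
  have hp0 : (0:ℝ) < p := lt_trans one_pos hp
  have hpq : p.HolderConjugate (Real.conjExponent p) := .conjExponent hp
  set q := Real.conjExponent p with hq
  -- key: energy of ρ is at most energy of any η admissible for Γt
  have key : ∀ η ∈ Adm Γt, energy σ p ρ ≤ energy σ p η := by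
    intro η hη
    obtain ⟨hη0, hη1⟩ := hη
    have hρ0 := hρ.1
    -- apply beurling with h = η - ρ
    have hb : 0 ≤ ∑ e, (η e - ρ e) * ρ e ^ (p - 1) * σ e := by
      apply hbeurling
      intro γ hγ
      have : ∑ e, γ e * (η e - ρ e) = (∑ e, γ e * η e) - ∑ e, γ e * ρ e := by
        rw [← Finset.sum_sub_distrib]; congr 1; ext e; ring
      rw [this, hlen γ hγ]
      linarith [hη1 γ hγ]
    have hpow : ∀ e, ρ e * ρ e ^ (p - 1) = ρ e ^ p := by
      intro e
      rw [← Real.rpow_one_add' (hρ0 e) (by linarith)]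
      ring_nf
    -- rewrite hb: energy ρ ≤ ∑ η ρ^{p-1} σ
    have hb2 : energy σ p ρ ≤ ∑ e, η e * ρ e ^ (p - 1) * σ e := by
      have : ∑ e, (η e - ρ e) * ρ e ^ (p - 1) * σ e
          = (∑ e, η e * ρ e ^ (p - 1) * σ e) - ∑ e, σ e * ρ e ^ p := by
        rw [← Finset.sum_sub_distrib]
        congr 1; ext e
        rw [← hpow e]; ring
      rw [this] at hb
      have hE : energy σ p ρ = ∑ e, σ e * ρ e ^ p := by
        unfold energy; congr 1; ext e; rw [abs_of_nonneg (hρ0 e)]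
      linarith
    -- Young's inequality pointwise
    have hyoung : ∑ e, η e * ρ e ^ (p - 1) * σ e
        ≤ energy σ p η / p + energy σ p ρ / q := by
      have hpt : ∀ e, η e * ρ e ^ (p - 1) * σ e
          ≤ σ e * |η e| ^ p / p + σ e * |ρ e| ^ p / q := by
        intro e
        have h1 : η e * ρ e ^ (p - 1) ≤ η e ^ p / p + (ρ e ^ (p - 1)) ^ q / q :=
          Real.young_inequality_of_nonneg (hη0 e) (Real.rpow_nonneg (hρ0 e) _) hpq
        have h2 : (ρ e ^ (p - 1)) ^ q = ρ e ^ p := by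
          rw [← Real.rpow_mul (hρ0 e), hpq.sub_one_mul_conj]
        rw [h2] at h1
        rw [abs_of_nonneg (hη0 e), abs_of_nonneg (hρ0 e)]
        calc η e * ρ e ^ (p - 1) * σ e = σ e * (η e * ρ e ^ (p - 1)) := by ring
          _ ≤ σ e * (η e ^ p / p + ρ e ^ p / q) :=
              mul_le_mul_of_nonneg_left h1 (hσ e).le
          _ = σ e * η e ^ p / p + σ e * ρ e ^ p / q := by ring
      calc ∑ e, η e * ρ e ^ (p - 1) * σ e
          ≤ ∑ e, (σ e * |η e| ^ p / p + σ e * |ρ e| ^ p / q) :=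
            Finset.sum_le_sum fun e _ => hpt e
        _ = energy σ p η / p + energy σ p ρ / q := by
            unfold energy
            rw [Finset.sum_add_distrib, ← Finset.sum_div, ← Finset.sum_div]
    -- combine
    have h3 : energy σ p ρ ≤ energy σ p η / p + energy σ p ρ / q :=
      le_trans hb2 hyoung
    have hiq : p⁻¹ + q⁻¹ = 1 := hpq.inv_add_inv_eq_one
    have hfin : energy σ p ρ * p⁻¹ ≤ energy σ p η * p⁻¹ := by
      rw [div_eq_mul_inv, div_eq_mul_inv] at h3
      have hq' : q⁻¹ = 1 - p⁻¹ := by linarith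
      rw [hq'] at h3
      nlinarith
    exact le_of_mul_le_mul_right (by simpa [mul_comm] using hfin) (inv_pos.2 hp0)
  -- both inequalities
  apply le_antisymm
  · -- pMod Γt ≤ pMod Γ since Adm Γ ⊆ Adm Γt
    apply le_iInf₂
    intro η hη
    refine iInf₂_le η ⟨hη.1, fun γ hγ => hη.2 γ (hsub hγ)⟩
  · apply le_iInf₂
    intro η hη
    calc pMod σ p Γ ≤ ENNReal.ofReal (energy σ p ρ) := iInf₂_le ρ hρ
      _ ≤ ENNReal.ofReal (energy σ p η) := ENNReal.ofReal_le_ofReal (key η hη)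
end

section
/- (Strong duality for p-modulus) For a finite family Γ of nonzero nonnegative usage vectors and 1 < p < ∞, Mod_{p,σ}(Γ) = sup over λ ∈ ℝ^Γ_{≥0} of g(λ), where g(λ) = ∑_γ λ(γ) − (p−1) ∑_e σ(e) ( (1/(p σ(e))) ∑_γ λ(γ)N(γ,e) )^{p/(p−1)}. -/
/-- The dual objective function `g(λ)` for the `p`-modulus problem. -/
noncomputable def dualObj {E ι : Type*} [Fintype E] [Fintype ι]
    (σ : E → ℝ) (p : ℝ) (N : ι → E → ℝ) (lam : ι → ℝ) : ℝ :=
  ∑ i, lam i -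
    (p - 1) * ∑ e, σ e * ((1 / (p * σ e)) * ∑ i, lam i * N i e) ^ (p / (p - 1))

open Real Set


lemma edge_le {s c p : ℝ} (hs : 0 < s) (hc : 0 ≤ c) (hp : 1 < p)
    {r : ℝ} (hr : 0 ≤ r) :
    -((p - 1) * (s * ((1 / (p * s)) * c) ^ (p / (p - 1)))) ≤ s * r ^ p - c * r := by
  set q : ℝ := p / (p - 1) with hqdef
  have hpq : p.HolderConjugate q := Real.HolderConjugate.conjExponent hp
  have hps : 0 < p * s := mul_pos hpq.pos hs
  set t : ℝ := (1 / (p * s)) * c with ht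
  have ht0 : 0 ≤ t := mul_nonneg (by positivity) hc
  have hab := Real.young_inequality_of_nonneg
    (mul_nonneg (Real.rpow_nonneg hps.le p⁻¹) hr)
    (mul_nonneg ht0 (Real.rpow_nonneg hps.le q⁻¹)) hpq
  have h1 : ((p * s) ^ p⁻¹ * r) ^ p = (p * s) * r ^ p := by
    rw [Real.mul_rpow (Real.rpow_nonneg hps.le _) hr,
      ← Real.rpow_mul hps.le, inv_mul_cancel₀ hpq.ne_zero, Real.rpow_one]
  have h2 : (t * (p * s) ^ q⁻¹) ^ q = t ^ q * (p * s) := by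
    rw [Real.mul_rpow ht0 (Real.rpow_nonneg hps.le _),
      ← Real.rpow_mul hps.le, inv_mul_cancel₀ hpq.symm.ne_zero, Real.rpow_one]
  have h3 : ((p * s) ^ p⁻¹ * r) * (t * (p * s) ^ q⁻¹) = c * r := by
    have : (p * s) ^ p⁻¹ * (p * s) ^ q⁻¹ = p * s := by
      rw [← Real.rpow_add hps, hpq.inv_add_inv_eq_one, Real.rpow_one]
    have hct : c = p * s * t := by
      rw [ht]; field_simp
    calc ((p * s) ^ p⁻¹ * r) * (t * (p * s) ^ q⁻¹)
        = ((p * s) ^ p⁻¹ * (p * s) ^ q⁻¹) * t * r := by ring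
      _ = c * r := by rw [this, ← hct]
  rw [h1, h2, h3] at hab
  have hq1 : (p * s) / q = (p - 1) * s := by
    rw [hqdef]; field_simp
  have : c * r ≤ s * r ^ p + (p - 1) * s * t ^ q := by
    calc c * r ≤ (p * s) * r ^ p / p + t ^ q * (p * s) / q := hab
      _ = s * r ^ p + (p - 1) * s * t ^ q := by
          have hpne := hpq.ne_zero
          have hqne := hpq.symm.ne_zero
          have hq2 : p * s = (p - 1) * s * q := (div_eq_iff hqne).1 hq1
          rw [mul_div_assoc (t ^ q), hq1,
            show p * s * r ^ p / p = s * r ^ p by rw [mul_assoc, mul_div_cancel_left₀ _ hpne]]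
          ring
  linarith

lemma edge_eq {s c p : ℝ} (hs : 0 < s) (hc : 0 ≤ c) (hp : 1 < p) :
    ∃ r : ℝ, 0 ≤ r ∧
      s * r ^ p - c * r = -((p - 1) * (s * ((1 / (p * s)) * c) ^ (p / (p - 1)))) := by
  set q : ℝ := p / (p - 1) with hqdef
  have hpq : p.HolderConjugate q := Real.HolderConjugate.conjExponent hp
  have hps : 0 < p * s := mul_pos hpq.pos hs
  set t : ℝ := (1 / (p * s)) * c with ht
  rcases eq_or_lt_of_le hc with hc0 | hcpos
  · refine ⟨0, le_refl _, ?_⟩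
    have : t = 0 := by rw [ht, ← hc0]; ring
    rw [this, Real.zero_rpow hpq.symm.ne_zero, Real.zero_rpow hpq.ne_zero]
    simp
  · have ht0 : 0 < t := mul_pos (by positivity) hcpos
    refine ⟨t ^ (q - 1), Real.rpow_nonneg ht0.le _, ?_⟩
    have h1 : (t ^ (q - 1)) ^ p = t ^ q := by
      rw [← Real.rpow_mul ht0.le]
      congr 1
      have hp1 : p - 1 ≠ 0 := ne_of_gt (by linarith)
      rw [hqdef]; field_simp
      ring
    have h2 : c * t ^ (q - 1) = p * s * t ^ q := by
      have hct : c = p * s * t := by rw [ht]; field_simp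
      rw [hct]
      have : t * t ^ (q - 1) = t ^ q := by
        calc t * t ^ (q - 1) = t ^ (1 : ℝ) * t ^ (q - 1) := by rw [Real.rpow_one]
          _ = t ^ (1 + (q - 1)) := (Real.rpow_add ht0 _ _).symm
          _ = t ^ q := by congr 1; ring
      rw [mul_assoc, this]
    rw [h1, h2]
    ring

section lag
variable {E ι : Type*} [Fintype E] [Fintype ι]
  (σ : E → ℝ) (p : ℝ) (N : ι → E → ℝ) (lam : ι → ℝ)

lemma swap_sum (N : ι → E → ℝ) (lam : ι → ℝ) (ρ : E → ℝ) :
    ∑ i, lam i * ∑ e, N i e * ρ e = ∑ e, (∑ i, lam i * N i e) * ρ e := by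
  calc ∑ i, lam i * ∑ e, N i e * ρ e
      = ∑ i, ∑ e, lam i * (N i e * ρ e) := by simp [Finset.mul_sum]
    _ = ∑ e, ∑ i, lam i * (N i e * ρ e) := Finset.sum_comm
    _ = ∑ e, (∑ i, lam i * N i e) * ρ e := by
        refine Finset.sum_congr rfl fun e _ => ?_
        rw [Finset.sum_mul]
        exact Finset.sum_congr rfl fun i _ => by ring

lemma pen_expand (N : ι → E → ℝ) (lam : ι → ℝ) (ρ : E → ℝ) :
    ∑ i, lam i * (1 - ∑ e, N i e * ρ e)
      = ∑ i, lam i - ∑ e, (∑ i, lam i * N i e) * ρ e := by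
  rw [← swap_sum N lam ρ, ← Finset.sum_sub_distrib]
  exact Finset.sum_congr rfl fun i _ => by ring

lemma lagrange_le (σ : E → ℝ) (p : ℝ) (N : ι → E → ℝ) (lam : ι → ℝ) (hσ : ∀ e, 0 < σ e) (hp : 1 < p) (hN : ∀ i e, 0 ≤ N i e)
    (hlam : ∀ i, 0 ≤ lam i) (ρ : E → ℝ) (hρ : ∀ e, 0 ≤ ρ e) :
    dualObj σ p N lam ≤
      (∑ i, lam i * (1 - ∑ e, N i e * ρ e)) + ∑ e, σ e * ρ e ^ p := by
  have hc : ∀ e, 0 ≤ ∑ i, lam i * N i e :=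
    fun e => Finset.sum_nonneg fun i _ => mul_nonneg (hlam i) (hN i e)
  have hsum : ∑ e, -((p - 1) * (σ e * ((1 / (p * σ e)) * ∑ i, lam i * N i e) ^ (p / (p - 1))))
      ≤ ∑ e, (σ e * ρ e ^ p - (∑ i, lam i * N i e) * ρ e) :=
    Finset.sum_le_sum fun e _ => edge_le (hσ e) (hc e) hp (hρ e)
  rw [Finset.sum_sub_distrib] at hsum
  have hL : ∑ e, -((p - 1) * (σ e * ((1 / (p * σ e)) * ∑ i, lam i * N i e) ^ (p / (p - 1))))
      = -((p - 1) * ∑ e, σ e * ((1 / (p * σ e)) * ∑ i, lam i * N i e) ^ (p / (p - 1))) := by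
    rw [Finset.mul_sum, ← Finset.sum_neg_distrib]
  rw [hL] at hsum
  rw [dualObj, pen_expand N lam]
  linarith

lemma lagrange_eq (σ : E → ℝ) (p : ℝ) (N : ι → E → ℝ) (lam : ι → ℝ) (hσ : ∀ e, 0 < σ e) (hp : 1 < p) (hN : ∀ i e, 0 ≤ N i e)
    (hlam : ∀ i, 0 ≤ lam i) :
    ∃ ρ : E → ℝ, (∀ e, 0 ≤ ρ e) ∧
      dualObj σ p N lam =
        (∑ i, lam i * (1 - ∑ e, N i e * ρ e)) + ∑ e, σ e * ρ e ^ p := by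
  have hc : ∀ e, 0 ≤ ∑ i, lam i * N i e :=
    fun e => Finset.sum_nonneg fun i _ => mul_nonneg (hlam i) (hN i e)
  choose r hr0 hreq using fun e => edge_eq (hσ e) (hc e) hp
  refine ⟨r, hr0, ?_⟩
  have hsum : ∑ e, (σ e * r e ^ p - (∑ i, lam i * N i e) * r e)
      = ∑ e, -((p - 1) * (σ e * ((1 / (p * σ e)) * ∑ i, lam i * N i e) ^ (p / (p - 1)))) :=
    Finset.sum_congr rfl fun e _ => hreq e
  rw [Finset.sum_sub_distrib] at hsum
  have hL : ∑ e, -((p - 1) * (σ e * ((1 / (p * σ e)) * ∑ i, lam i * N i e) ^ (p / (p - 1))))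
      = -((p - 1) * ∑ e, σ e * ((1 / (p * σ e)) * ∑ i, lam i * N i e) ^ (p / (p - 1))) := by
    rw [Finset.mul_sum, ← Finset.sum_neg_distrib]
  rw [hL] at hsum
  rw [dualObj, pen_expand N lam]
  linarith

end lag

/-- Strong duality: `Mod_{p,σ}(Γ) = sup_{λ ≥ 0} g(λ)`. -/
theorem stmt9 {E ι : Type*} [Fintype E] [Fintype ι]
    (σ : E → ℝ) (hσ : ∀ e, 0 < σ e)
    (p : ℝ) (hp : 1 < p)
    (N : ι → E → ℝ) (hN : ∀ i e, 0 ≤ N i e) (hNz : ∀ i, N i ≠ 0) :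
    sInf {x : ℝ | ∃ ρ : E → ℝ, (∀ e, 0 ≤ ρ e) ∧
        (∀ i, 1 ≤ ∑ e, N i e * ρ e) ∧ x = ∑ e, σ e * |ρ e| ^ p}
      = ⨆ lam : {l : ι → ℝ // ∀ i, 0 ≤ l i}, dualObj σ p N lam.1 := by
  classical
  have hp0 : 0 < p := lt_trans one_pos hp
  set S : Set ℝ := {x : ℝ | ∃ ρ : E → ℝ, (∀ e, 0 ≤ ρ e) ∧
      (∀ i, 1 ≤ ∑ e, N i e * ρ e) ∧ x = ∑ e, σ e * |ρ e| ^ p} with hSdef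
  -- strictly positive row sums
  have hsipos : ∀ i, 0 < ∑ e, N i e := by
    intro i
    obtain ⟨e, he⟩ := Function.ne_iff.mp (hNz i)
    exact Finset.sum_pos' (fun e _ => hN i e)
      ⟨e, Finset.mem_univ e, lt_of_le_of_ne (hN i e) (Ne.symm he)⟩
  -- Slater point
  set R : ℝ := 1 + ∑ i, (∑ e, N i e)⁻¹ with hRdef
  have hRpos : 0 < R :=
    add_pos_of_pos_of_nonneg one_pos
      (Finset.sum_nonneg fun i _ => inv_nonneg.2 (hsipos i).le)
  have hslater : ∀ i, 1 < ∑ e, N i e * R := by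
    intro i
    have h1 : (∑ e, N i e)⁻¹ < R := by
      have h2 : (∑ e, N i e)⁻¹ ≤ ∑ j, (∑ e, N j e)⁻¹ :=
        Finset.single_le_sum (fun j _ => inv_nonneg.2 (hsipos j).le) (Finset.mem_univ i)
      rw [hRdef]; linarith
    have := mul_lt_mul_of_pos_right h1 (hsipos i)
    rw [inv_mul_cancel₀ (hsipos i).ne'] at this
    calc (1 : ℝ) < R * ∑ e, N i e := this
      _ = ∑ e, N i e * R := by rw [Finset.mul_sum]; exact Finset.sum_congr rfl fun e _ => by ring
  have hSne : S.Nonempty := by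
    refine ⟨∑ e, σ e * |(fun _ : E => R) e| ^ p, fun _ => R, fun e => hRpos.le,
      fun i => (hslater i).le, rfl⟩
  have hSbd : BddBelow S := by
    refine ⟨0, ?_⟩
    rintro x ⟨ρ, h0, h1, rfl⟩
    exact Finset.sum_nonneg fun e _ =>
      mul_nonneg (hσ e).le (Real.rpow_nonneg (abs_nonneg _) p)
  set M : ℝ := sInf S with hMdef
  -- weak duality
  have hweak : ∀ lam : {l : ι → ℝ // ∀ i, 0 ≤ l i}, dualObj σ p N lam.1 ≤ M := by
    intro lam
    apply le_csInf hSne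
    rintro x ⟨ρ, h0, h1, rfl⟩
    have hle := lagrange_le σ p N lam.1 hσ hp hN lam.2 ρ h0
    have hpen : ∑ i, lam.1 i * (1 - ∑ e, N i e * ρ e) ≤ 0 :=
      Finset.sum_nonpos fun i _ =>
        mul_nonpos_of_nonneg_of_nonpos (lam.2 i) (by linarith [h1 i])
    have habs : ∑ e, σ e * |ρ e| ^ p = ∑ e, σ e * ρ e ^ p :=
      Finset.sum_congr rfl fun e _ => by rw [abs_of_nonneg (h0 e)]
    rw [habs]
    linarith
  -- the open convex set for separation
  set C : Set ((ι → ℝ) × ℝ) := {zw | ∃ ρ : E → ℝ, (∀ e, 0 ≤ ρ e) ∧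
      (∀ i, 1 - ∑ e, N i e * ρ e < zw.1 i) ∧ ∑ e, σ e * ρ e ^ p < zw.2} with hCdef
  have hCconv : Convex ℝ C := by
    rw [convex_iff_forall_pos]
    rintro ⟨z1, w1⟩ ⟨ρ1, hρ1, hz1, hw1⟩ ⟨z2, w2⟩ ⟨ρ2, hρ2, hz2, hw2⟩ a b ha hb hab
    refine ⟨fun e => a * ρ1 e + b * ρ2 e,
      fun e => add_nonneg (mul_nonneg ha.le (hρ1 e)) (mul_nonneg hb.le (hρ2 e)), ?_, ?_⟩
    · intro i
      have hA : ∑ e, N i e * (a * ρ1 e + b * ρ2 e)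
          = a * ∑ e, N i e * ρ1 e + b * ∑ e, N i e * ρ2 e := by
        rw [Finset.mul_sum, Finset.mul_sum, ← Finset.sum_add_distrib]
        exact Finset.sum_congr rfl fun e _ => by ring
      have h1 := mul_lt_mul_of_pos_left (hz1 i) ha
      have h2 := mul_lt_mul_of_pos_left (hz2 i) hb
      have hfst : (a • (z1, w1) + b • (z2, w2)).1 i = a * z1 i + b * z2 i := by
        simp [Prod.smul_mk]
      rw [hfst, hA]
      nlinarith
    · have hconv : ∀ e, (a * ρ1 e + b * ρ2 e) ^ p ≤ a * ρ1 e ^ p + b * ρ2 e ^ p := by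
        intro e
        have := (convexOn_rpow hp.le).2 (Set.mem_Ici.2 (hρ1 e)) (Set.mem_Ici.2 (hρ2 e))
          ha.le hb.le hab
        simpa [smul_eq_mul] using this
      have hsum : ∑ e, σ e * (a * ρ1 e + b * ρ2 e) ^ p
          ≤ a * ∑ e, σ e * ρ1 e ^ p + b * ∑ e, σ e * ρ2 e ^ p := by
        rw [Finset.mul_sum, Finset.mul_sum, ← Finset.sum_add_distrib]
        refine Finset.sum_le_sum fun e _ => ?_
        have := mul_le_mul_of_nonneg_left (hconv e) (hσ e).le
        nlinarith
      have hsnd : (a • (z1, w1) + b • (z2, w2)).2 = a * w1 + b * w2 := by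
        simp [Prod.smul_mk]
      rw [hsnd]
      have h1 := mul_lt_mul_of_pos_left hw1 ha
      have h2 := mul_lt_mul_of_pos_left hw2 hb
      linarith
  have hCopen : IsOpen C := by
    have hCU : C = ⋃ ρ : {ρ : E → ℝ // ∀ e, 0 ≤ ρ e},
        ((⋂ i, {zw : (ι → ℝ) × ℝ | 1 - ∑ e, N i e * ρ.1 e < zw.1 i}) ∩
          {zw : (ι → ℝ) × ℝ | ∑ e, σ e * ρ.1 e ^ p < zw.2}) := by
      ext zw
      simp only [hCdef, Set.mem_iUnion, Set.mem_inter_iff, Set.mem_iInter, Set.mem_setOf_eq]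
      constructor
      · rintro ⟨ρ, h0, h1, h2⟩; exact ⟨⟨ρ, h0⟩, h1, h2⟩
      · rintro ⟨⟨ρ, h0⟩, h1, h2⟩; exact ⟨ρ, h0, h1, h2⟩
    rw [hCU]
    refine isOpen_iUnion fun ρ => IsOpen.inter (isOpen_iInter_of_finite fun i => ?_) ?_
    · exact isOpen_lt continuous_const ((continuous_apply i).comp continuous_fst)
    · exact isOpen_lt continuous_const continuous_snd
  have hMnotin : ((0 : ι → ℝ), M) ∉ C := by
    rintro ⟨ρ, h0, h1, h2⟩
    have hfeas : (∑ e, σ e * |ρ e| ^ p) ∈ S := by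
      refine ⟨ρ, h0, fun i => ?_, rfl⟩
      have := h1 i
      simp only [Pi.zero_apply] at this
      linarith
    have hMle := csInf_le hSbd hfeas
    have habs : ∑ e, σ e * |ρ e| ^ p = ∑ e, σ e * ρ e ^ p :=
      Finset.sum_congr rfl fun e _ => by rw [abs_of_nonneg (h0 e)]
    rw [habs] at hMle
    simp only at h2
    linarith
  obtain ⟨f, hf⟩ := geometric_hahn_banach_open_point hCconv hCopen hMnotin
  set μ : ι → ℝ := fun i => f ((Pi.single i 1 : ι → ℝ), (0 : ℝ)) with hμdef
  set β : ℝ := f ((0 : ι → ℝ), (1 : ℝ)) with hβdef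
  have hrepr : ∀ z : ι → ℝ, ∀ w : ℝ, f (z, w) = (∑ i, z i * μ i) + w * β := by
    intro z w
    have hzw : (z, w) = (∑ i, ((Pi.single i (z i) : ι → ℝ), (0 : ℝ))) + w • ((0 : ι → ℝ), (1 : ℝ)) := by
      apply Prod.ext
      · simp [Prod.fst_sum, Finset.univ_sum_single]
      · simp [Prod.snd_sum]
    rw [hzw, map_add, map_sum, map_smul]
    have hterm : ∀ i, f ((Pi.single i (z i) : ι → ℝ), (0 : ℝ)) = z i * μ i := by
      intro i
      have hps : z i • ((Pi.single i 1 : ι → ℝ), (0 : ℝ))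
          = ((Pi.single i (z i) : ι → ℝ), (0 : ℝ)) := by
        rw [Prod.smul_mk, smul_zero, ← Pi.single_smul, smul_eq_mul, mul_one]
      rw [← hps, map_smul, smul_eq_mul, hμdef]
    simp only [hterm, smul_eq_mul]
    rfl
  -- the value at the separated point
  have hfM : f ((0 : ι → ℝ), M) = M * β := by
    rw [hrepr]; simp
  set W0 : ℝ := ∑ e, σ e * R ^ p with hW0def
  have hmemC : ∀ (z : ι → ℝ) (w : ℝ), (∀ i, 0 ≤ z i) → W0 < w → (z, w) ∈ C := by
    intro z w hz hw
    refine ⟨fun _ => R, fun _ => hRpos.le, fun i => ?_, by simpa using hw⟩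
    have := hslater i
    have := hz i
    simp only
    linarith
  have hβneg : β < 0 := by
    set w1 : ℝ := max W0 M + 1 with hw1def
    have h1 : ((0 : ι → ℝ), w1) ∈ C :=
      hmemC 0 w1 (fun i => le_refl 0) (by rw [hw1def]; have := le_max_left W0 M; linarith)
    have h2 := hf _ h1
    rw [hrepr, hfM] at h2
    simp only [Pi.zero_apply, zero_mul, Finset.sum_const_zero, zero_add] at h2
    have hw1M : M < w1 := by rw [hw1def]; have := le_max_right W0 M; linarith
    nlinarith
  have hμi : ∀ i, μ i ≤ 0 := by
    intro i
    by_contra hcon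
    push_neg at hcon
    set c : ℝ := max 1 ((M * β - (W0 + 1) * β) / μ i + 1) with hcdef
    have hc1 : 1 ≤ c := le_max_left _ _
    have hcq : (M * β - (W0 + 1) * β) / μ i + 1 ≤ c := le_max_right _ _
    have h1 : ((Pi.single i c : ι → ℝ), W0 + 1) ∈ C := by
      refine hmemC _ _ (fun j => ?_) (by linarith)
      rcases eq_or_ne j i with rfl | hji
      · simp; linarith
      · simp [Pi.single_eq_of_ne hji]
    have h2 := hf _ h1
    rw [hrepr, hfM] at h2
    have hsum : ∑ j, (Pi.single i c : ι → ℝ) j * μ j = c * μ i := by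
      rw [Finset.sum_eq_single i]
      · simp
      · intro j _ hji; simp [Pi.single_eq_of_ne hji]
      · intro h; exact absurd (Finset.mem_univ i) h
    rw [hsum] at h2
    have hkey : (M * β - (W0 + 1) * β) / μ i * μ i = M * β - (W0 + 1) * β :=
      div_mul_cancel₀ _ (ne_of_gt hcon)
    nlinarith
  set lam : ι → ℝ := fun i => μ i / β with hlamdef
  have hlam0 : ∀ i, 0 ≤ lam i := by
    intro i
    rw [hlamdef]
    rw [div_nonneg_iff]
    right
    exact ⟨hμi i, hβneg.le⟩
  have hμlam : ∀ i, μ i = lam i * β := by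
    intro i
    rw [hlamdef]
    exact (div_mul_cancel₀ _ hβneg.ne).symm
  -- key lower bound from separation
  have hlag : ∀ ρ : E → ℝ, (∀ e, 0 ≤ ρ e) →
      M ≤ (∑ i, lam i * (1 - ∑ e, N i e * ρ e)) + ∑ e, σ e * ρ e ^ p := by
    intro ρ h0
    set base : ℝ := (∑ i, lam i * (1 - ∑ e, N i e * ρ e)) + ∑ e, σ e * ρ e ^ p with hbase
    have hKpos : 0 < (∑ i, lam i) + 1 :=
      add_pos_of_nonneg_of_pos (Finset.sum_nonneg fun i _ => hlam0 i) one_pos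
    have hstep : ∀ ε : ℝ, 0 < ε → M < base + ε * ((∑ i, lam i) + 1) := by
      intro ε hε
      set z : ι → ℝ := fun i => 1 - ∑ e, N i e * ρ e + ε with hzdef
      have hmem : (z, ∑ e, σ e * ρ e ^ p + ε) ∈ C :=
        ⟨ρ, h0, fun i => by simp [hzdef]; linarith, by simp; linarith⟩
      have h2 := hf _ hmem
      rw [hrepr, hfM] at h2
      -- rewrite μ in terms of lam
      have hzsum : ∑ i, z i * μ i = β * ∑ i, z i * lam i := by
        rw [Finset.mul_sum]
        exact Finset.sum_congr rfl fun i _ => by rw [hμlam i]; ring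
      rw [hzsum] at h2
      -- h2 : β * ∑ z lam + (O + ε) * β < M * β, divide by β < 0
      have h3 : M < ∑ i, z i * lam i + ((∑ e, σ e * ρ e ^ p) + ε) := by
        nlinarith
      have hzlam : ∑ i, z i * lam i
          = (∑ i, lam i * (1 - ∑ e, N i e * ρ e)) + ε * ∑ i, lam i := by
        rw [Finset.mul_sum, ← Finset.sum_add_distrib]
        exact Finset.sum_congr rfl fun i _ => by rw [hzdef]; ring
      rw [hzlam] at h3
      rw [hbase]
      linarith
    by_contra hcon
    push_neg at hcon
    have hε : 0 < (M - base) / ((∑ i, lam i) + 1) := div_pos (by linarith) hKpos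
    have := hstep _ hε
    rw [div_mul_cancel₀ _ (ne_of_gt hKpos)] at this
    linarith
  -- strong duality
  obtain ⟨ρs, hρs, heq⟩ := lagrange_eq σ p N lam hσ hp hN hlam0
  have hstrong : M ≤ dualObj σ p N lam := by
    rw [heq]; exact hlag ρs hρs
  have hNe : Nonempty {l : ι → ℝ // ∀ i, 0 ≤ l i} := ⟨⟨fun _ => 0, fun i => le_refl 0⟩⟩
  have hbddAbove : BddAbove (Set.range fun lam : {l : ι → ℝ // ∀ i, 0 ≤ l i} =>
      dualObj σ p N lam.1) := by
    refine ⟨M, ?_⟩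
    rintro x ⟨lam', rfl⟩
    exact hweak lam'
  refine le_antisymm ?_ (ciSup_le hweak)
  exact le_ciSup_of_le hbddAbove ⟨lam, hlam0⟩ hstrong
end

section
/- Let 1 < p < ∞ and let (ρ*, λ*) be a saddle point of the Lagrangian for the p-modulus problem. Then ℓ_{ρ*}(γ) = 1 for every γ with λ*(γ) > 0, and for every h : E → ℝ with ℓ_h(γ) ≥ 0 for all γ with λ*(γ) > 0, one has ∑_e σ(e) h(e) ρ*(e)^{p−1} ≥ 0. In other words, the Lagrangian subfamily Γ_{λ*} is a Beurling subfamily. -/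
/-- The Lagrangian for the `p`-modulus problem. -/
noncomputable def lagrangian {E ι : Type*} [Fintype E] [Fintype ι]
    (σ : E → ℝ) (p : ℝ) (N : ι → E → ℝ) (ρ : E → ℝ) (lam : ι → ℝ) : ℝ :=
  ∑ e, σ e * |ρ e| ^ p + ∑ i, lam i * (1 - ∑ e, N i e * ρ e)

open Filter Topology in
lemma absrpow_deriv (p : ℝ) (hp : 1 < p) (x : ℝ) (hx : 0 ≤ x) :
    HasDerivAt (fun t : ℝ => |t| ^ p) (p * x ^ (p - 1)) x := by
  rcases hx.lt_or_eq with hx | hx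
  · have h1 : HasDerivAt (fun t : ℝ => t ^ p) (p * x ^ (p - 1)) x :=
      Real.hasDerivAt_rpow_const (Or.inl hx.ne')
    refine h1.congr_of_eventuallyEq ?_
    filter_upwards [eventually_gt_nhds hx] with t ht
    rw [abs_of_pos ht]
  · have h0 : p * (0:ℝ) ^ (p - 1) = 0 := by
      rw [Real.zero_rpow (by linarith), mul_zero]
    rw [← hx, h0] at *
    rw [hasDerivAt_iff_tendsto_slope]
    have hbound : ∀ t : ℝ, t ≠ 0 → ‖slope (fun t : ℝ => |t| ^ p) 0 t‖ ≤ |t| ^ (p - 1) := by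
      intro t ht
      have habs : (0:ℝ) < |t| := abs_pos.mpr ht
      rw [slope_def_field]
      simp only [abs_zero, Real.zero_rpow (by linarith : p ≠ 0), sub_zero]
      rw [div_eq_mul_inv, norm_mul, norm_inv, Real.norm_eq_abs, Real.norm_eq_abs,
        abs_of_pos (Real.rpow_pos_of_pos habs p)]
      rw [Real.rpow_sub habs, Real.rpow_one, div_eq_mul_inv]
    have htend : Tendsto (fun t : ℝ => |t| ^ (p - 1)) (𝓝[≠] 0) (𝓝 0) := by
      have : ContinuousAt (fun u : ℝ => u ^ (p - 1)) 0 :=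
        (Real.continuousAt_rpow_const 0 (p - 1) (Or.inr (by linarith))).congr (by rfl)
      have h2 : Tendsto (fun t : ℝ => |t|) (𝓝[≠] 0) (𝓝 0) := by
        have := ((continuous_abs.tendsto (0:ℝ)).mono_left nhdsWithin_le_nhds :
          Tendsto (fun t : ℝ => |t|) (𝓝[≠] (0:ℝ)) (𝓝 |(0:ℝ)|))
        simpa using this
      have := this.tendsto.comp h2
      simpa [Function.comp_def, Real.zero_rpow (show p - 1 ≠ 0 by linarith)] using this
    exact squeeze_zero_norm' (eventually_nhdsWithin_of_forall fun t ht => hbound t ht) htend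

/-- a saddle point `(ρ*, λ*)` of the Lagrangian yields a Beurling
subfamily: `ℓ_{ρ*}(γ) = 1` whenever `λ*(γ) > 0`, and for every `h` with
`ℓ_h(γ) ≥ 0` on `Γ_{λ*}` one has `∑_e σ(e) h(e) ρ*(e)^{p-1} ≥ 0`. -/
theorem stmt10 {E ι : Type*} [Fintype E] [Fintype ι]
    (σ : E → ℝ) (hσ : ∀ e, 0 < σ e)
    (p : ℝ) (hp : 1 < p)
    (N : ι → E → ℝ) (hN : ∀ i e, 0 ≤ N i e)
    (ρstar : E → ℝ) (lamstar : ι → ℝ) (hlam : ∀ i, 0 ≤ lamstar i)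
    (hsaddle₁ : ∀ lam : ι → ℝ, (∀ i, 0 ≤ lam i) →
      lagrangian σ p N ρstar lam ≤ lagrangian σ p N ρstar lamstar)
    (hsaddle₂ : ∀ ρ : E → ℝ,
      lagrangian σ p N ρstar lamstar ≤ lagrangian σ p N ρ lamstar) :
    (∀ i, 0 < lamstar i → ∑ e, N i e * ρstar e = 1) ∧
      (∀ h : E → ℝ, (∀ i, 0 < lamstar i → 0 ≤ ∑ e, N i e * h e) →
        0 ≤ ∑ e, σ e * h e * ρstar e ^ (p - 1)) := by
  classical
  -- abbreviation
  set ℓ : ι → ℝ := fun i => ∑ e, N i e * ρstar e with hℓ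
  -- Step A: ℓ i ≥ 1 for all i
  have hfeas : ∀ i, 1 ≤ ℓ i := by
    intro i
    have h1 := hsaddle₁ (fun j => lamstar j + if j = i then 1 else 0)
      (fun j => by by_cases hj : j = i <;> simp [hj] <;> linarith [hlam i, hlam j])
    simp only [lagrangian, add_mul] at h1
    rw [Finset.sum_add_distrib] at h1
    have h2 : ∑ j, (if j = i then (1:ℝ) else 0) * (1 - ∑ e, N j e * ρstar e) ≤ 0 := by
      linarith
    simp only [ite_mul, one_mul, zero_mul, Finset.sum_ite_eq', Finset.mem_univ,
      if_true] at h2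
    simp only [hℓ]; linarith
  -- Step B: complementary slackness
  have hcs : ∀ i, 0 < lamstar i → ℓ i = 1 := by
    have h0 := hsaddle₁ (fun _ => 0) (fun _ => le_refl 0)
    simp only [lagrangian, zero_mul, Finset.sum_const_zero, add_zero] at h0
    have hterm : ∀ j ∈ Finset.univ, lamstar j * (1 - ℓ j) ≤ 0 := fun j _ =>
      mul_nonpos_of_nonneg_of_nonpos (hlam j) (by linarith [hfeas j])
    have hsum : ∑ j, lamstar j * (1 - ℓ j) = 0 :=
      le_antisymm (Finset.sum_nonpos hterm) (by simpa [hℓ] using h0)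
    intro i hi
    have := (Finset.sum_eq_zero_iff_of_nonpos hterm).mp hsum i (Finset.mem_univ i)
    have h1 : (1 - ℓ i) = 0 := by
      rcases mul_eq_zero.mp this with h | h
      · exact absurd h hi.ne'
      · exact h
    linarith
  -- Step C: ρstar ≥ 0
  have hρ : ∀ e, 0 ≤ ρstar e := by
    intro e
    by_contra hneg
    push_neg at hneg
    set ρ' : E → ℝ := Function.update ρstar e 0 with hρ'
    have hle : ∀ e', ρstar e' ≤ ρ' e' := by
      intro e'
      rcases eq_or_ne e' e with rfl | hne
      · simp [hρ', hneg.le]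
      · simp [hρ', hne]
    have hkey := hsaddle₂ ρ'
    simp only [lagrangian] at hkey
    have hsum1 : ∑ e', σ e' * |ρ' e'| ^ p < ∑ e', σ e' * |ρstar e'| ^ p := by
      apply Finset.sum_lt_sum
      · intro e' _
        rcases eq_or_ne e' e with rfl | hne
        · simp only [hρ', Function.update_self, abs_zero]
          rw [Real.zero_rpow (by linarith), mul_zero]
          exact mul_nonneg (hσ e').le (Real.rpow_nonneg (abs_nonneg _) p)
        · simp [hρ', hne]
      · exact ⟨e, Finset.mem_univ e, by
          simp only [hρ', Function.update_self, abs_zero]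
          rw [Real.zero_rpow (by linarith), mul_zero]
          exact mul_pos (hσ e) (Real.rpow_pos_of_pos (abs_pos.mpr hneg.ne) p)⟩
    have hsum2 : ∑ i, lamstar i * (1 - ∑ e', N i e' * ρ' e') ≤
        ∑ i, lamstar i * (1 - ∑ e', N i e' * ρstar e') := by
      apply Finset.sum_le_sum
      intro i _
      apply mul_le_mul_of_nonneg_left _ (hlam i)
      have : ∑ e', N i e' * ρstar e' ≤ ∑ e', N i e' * ρ' e' :=
        Finset.sum_le_sum fun e' _ => mul_le_mul_of_nonneg_left (hle e') (hN i e')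
      linarith
    linarith
  constructor
  · intro i hi; exact hcs i hi
  -- Step D: stationarity
  · intro h hh
    set D : ℝ := ∑ e, σ e * (p * ρstar e ^ (p - 1) * h e) -
      ∑ i, lamstar i * ∑ e, N i e * h e with hD
    set g : ℝ → ℝ := fun t => lagrangian σ p N (fun e => ρstar e + t * h e) lamstar with hg
    have hgderiv : HasDerivAt g D 0 := by
      have h1 : ∀ e : E, HasDerivAt (fun t : ℝ => σ e * |ρstar e + t * h e| ^ p)
          (σ e * (p * ρstar e ^ (p - 1) * h e)) 0 := by
        intro e
        have hin : HasDerivAt (fun t : ℝ => ρstar e + t * h e) (h e) 0 := by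
          simpa using ((hasDerivAt_id (0:ℝ)).mul_const (h e)).const_add (ρstar e)
        have hout : HasDerivAt (fun x : ℝ => |x| ^ p) (p * ρstar e ^ (p - 1))
            (ρstar e + 0 * h e) := by
          rw [zero_mul, add_zero]; exact absrpow_deriv p hp (ρstar e) (hρ e)
        have := (hout.comp 0 hin).const_mul (σ e)
        exact this
      have h2 : ∀ i : ι, HasDerivAt
          (fun t : ℝ => lamstar i * (1 - ∑ e, N i e * (ρstar e + t * h e)))
          (-(lamstar i * ∑ e, N i e * h e)) 0 := by
        intro i
        have hin : HasDerivAt (fun t : ℝ => ∑ e, N i e * (ρstar e + t * h e))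
            (∑ e, N i e * h e) 0 := by
          apply HasDerivAt.fun_sum
          intro e _
          have hin0 : HasDerivAt (fun t : ℝ => ρstar e + t * h e) (h e) 0 := by
            simpa using ((hasDerivAt_id (0:ℝ)).mul_const (h e)).const_add (ρstar e)
          exact hin0.const_mul (N i e)
        have := (hin.const_sub 1).const_mul (lamstar i)
        rw [show -(lamstar i * ∑ e, N i e * h e) = lamstar i * -∑ e, N i e * h e by ring]
        exact this
      have hs1 : HasDerivAt (fun t : ℝ => ∑ e, σ e * |ρstar e + t * h e| ^ p)
          (∑ e, σ e * (p * ρstar e ^ (p - 1) * h e)) 0 :=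
        HasDerivAt.fun_sum (fun e _ => h1 e)
      have hs2 : HasDerivAt
          (fun t : ℝ => ∑ i, lamstar i * (1 - ∑ e, N i e * (ρstar e + t * h e)))
          (∑ i, -(lamstar i * ∑ e, N i e * h e)) 0 :=
        HasDerivAt.fun_sum (fun i _ => h2 i)
      have := hs1.fun_add hs2
      simp only [Finset.sum_neg_distrib] at this
      simpa [hg, lagrangian, hD, sub_eq_add_neg] using this
    have hmin : IsLocalMin g 0 := by
      apply Filter.Eventually.of_forall
      intro t
      have := hsaddle₂ (fun e => ρstar e + t * h e)
      simpa [hg] using this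
    have hD0 : D = 0 := hmin.hasDerivAt_eq_zero hgderiv
    have hrhs : 0 ≤ ∑ i, lamstar i * ∑ e, N i e * h e := by
      apply Finset.sum_nonneg
      intro i _
      rcases (hlam i).lt_or_eq with hi | hi
      · exact mul_nonneg hi.le (hh i hi)
      · rw [← hi, zero_mul]
    have heq : ∑ e, σ e * (p * ρstar e ^ (p - 1) * h e) =
        p * ∑ e, σ e * h e * ρstar e ^ (p - 1) := by
      rw [Finset.mul_sum]; exact Finset.sum_congr rfl fun e _ => by ring
    have : 0 ≤ p * ∑ e, σ e * h e * ρstar e ^ (p - 1) := by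
      rw [← heq]; linarith [hD0, hrhs]
    exact nonneg_of_mul_nonneg_right this (by linarith)
end

section
/- If Γ is itself a minimal family for Mod_{p,σ}(Γ) (1 < p < ∞), then the optimal dual variable λ* is unique. -/
/-- The `p`-modulus of the subfamily indexed by `S ⊆ ι`. -/
noncomputable def pModOn {E ι : Type*} [Fintype E]
    (σ : E → ℝ) (p : ℝ) (N : ι → E → ℝ) (S : Set ι) : ℝ :=
  sInf {x : ℝ | ∃ ρ : E → ℝ, (∀ e, 0 ≤ ρ e) ∧
    (∀ i ∈ S, 1 ≤ ∑ e, N i e * ρ e) ∧ x = ∑ e, σ e * |ρ e| ^ p}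

open Filter Set Topology

lemma deriv_nonpos_of_max_right {h : ℝ → ℝ} {d : ℝ} (hd : HasDerivAt h d 0)
    (hmax : ∀ t : ℝ, 0 ≤ t → h t ≤ h 0) : d ≤ 0 := by
  have hs : Tendsto (slope h 0) (𝓝[≠] 0) (𝓝 d) := hasDerivAt_iff_tendsto_slope.mp hd
  have hs' : Tendsto (slope h 0) (𝓝[>] 0) (𝓝 d) :=
    hs.mono_left (nhdsWithin_mono _ (fun t ht => ne_of_gt ht))
  refine le_of_tendsto hs' ?_
  filter_upwards [self_mem_nhdsWithin] with t ht
  have ht' : (0:ℝ) < t := ht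
  have h2 := hmax t ht'.le
  have hsl : slope h 0 t = (h t - h 0) / t := by rw [slope_def_field, sub_zero]
  rw [hsl]
  exact div_nonpos_of_nonpos_of_nonneg (by linarith) ht'.le

lemma deriv_nonneg_of_max_left {h : ℝ → ℝ} {d a : ℝ} (ha : a < 0) (hd : HasDerivAt h d 0)
    (hmax : ∀ t : ℝ, a ≤ t → t ≤ 0 → h t ≤ h 0) : 0 ≤ d := by
  have hs : Tendsto (slope h 0) (𝓝[≠] 0) (𝓝 d) := hasDerivAt_iff_tendsto_slope.mp hd
  have hs' : Tendsto (slope h 0) (𝓝[<] 0) (𝓝 d) :=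
    hs.mono_left (nhdsWithin_mono _ (fun t ht => ne_of_lt ht))
  refine ge_of_tendsto hs' ?_
  have hmem : Ioi a ∈ 𝓝[<] (0:ℝ) := nhdsWithin_le_nhds (Ioi_mem_nhds ha)
  filter_upwards [self_mem_nhdsWithin, hmem] with t ht hta
  have ht' : t < 0 := ht
  have h2 := hmax t (le_of_lt hta) ht'.le
  have hsl : slope h 0 t = (h t - h 0) / t := by rw [slope_def_field, sub_zero]
  rw [hsl]
  exact div_nonneg_of_nonpos (by linarith) ht'.le

lemma kkt {E ι : Type*} [Fintype E] [Fintype ι]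
    (σ : E → ℝ) (hσ : ∀ e, 0 < σ e) (p : ℝ) (hp : 1 < p)
    (N : ι → E → ℝ) (hN : ∀ i e, 0 ≤ N i e) (lamstar : ι → ℝ) (h0 : ∀ i, 0 ≤ lamstar i)
    (hmax : ∀ lam : ι → ℝ, (∀ i, 0 ≤ lam i) → dualObj σ p N lam ≤ dualObj σ p N lamstar) :
    ∃ ρ : E → ℝ, (∀ e, 0 ≤ ρ e) ∧ (∀ i, 1 ≤ ∑ e, N i e * ρ e) ∧
      dualObj σ p N lamstar = ∑ e, σ e * |ρ e| ^ p := by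
  classical
  have hp1 : (0:ℝ) < p - 1 := by linarith
  have hp0 : (0:ℝ) < p := by linarith
  set q : ℝ := p / (p - 1) with hq_def
  have hq : 1 < q := (one_lt_div hp1).mpr (by linarith)
  have hq0 : 0 < q := by linarith
  set a : E → ℝ := fun e => (1 / (p * σ e)) * ∑ j, lamstar j * N j e with ha_def
  have ha : ∀ e, 0 ≤ a e := by
    intro e
    apply mul_nonneg
    · have := hσ e; positivity
    · exact Finset.sum_nonneg fun j _ => mul_nonneg (h0 j) (hN j e)
  set ρ : E → ℝ := fun e => a e ^ (q - 1) with hρ_def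
  have hρ0 : ∀ e, 0 ≤ ρ e := fun e => Real.rpow_nonneg (ha e) _
  -- KKT conditions via directional derivatives
  have key : ∀ i : ι, (1 ≤ ∑ e, N i e * ρ e) ∧ (0 < lamstar i → ∑ e, N i e * ρ e = 1) := by
    intro i
    set b : E → ℝ := fun e => N i e * (1 / (p * σ e)) with hb_def
    set φ : ℝ → ι → ℝ := fun t j => lamstar j + t * (if j = i then 1 else 0) with hφ_def
    have hφ0 : φ 0 = lamstar := by funext j; simp [hφ_def]
    have hφnn : ∀ t : ℝ, -(lamstar i) ≤ t → ∀ j, 0 ≤ φ t j := by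
      intro t ht j
      by_cases h : j = i
      · subst h; simp [hφ_def]; linarith
      · simp [hφ_def, h]; exact h0 j
    have hrepr : ∀ t : ℝ, dualObj σ p N (φ t) =
        ((∑ j, lamstar j) + t) - (p - 1) * ∑ e, σ e * (a e + t * b e) ^ q := by
      intro t
      have hsum1 : ∑ j, φ t j = (∑ j, lamstar j) + t := by
        simp [hφ_def, Finset.sum_add_distrib, ← Finset.mul_sum]
      have hsum2 : ∀ e, (1 / (p * σ e)) * ∑ j, φ t j * N j e = a e + t * b e := by
        intro e
        have h1 : ∑ j, φ t j * N j e = (∑ j, lamstar j * N j e) + t * N i e := by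
          simp only [hφ_def, add_mul, Finset.sum_add_distrib]
          congr 1
          simp [ite_mul, mul_assoc, ← Finset.mul_sum]
        rw [h1, ha_def, hb_def]
        ring
      unfold dualObj
      rw [hsum1]
      congr 2
      apply Finset.sum_congr rfl
      intro e _
      rw [hsum2 e]
    have hder : ∀ e, HasDerivAt (fun t : ℝ => (a e + t * b e) ^ q) (q * a e ^ (q - 1) * b e) 0 := by
      intro e
      have h1 : HasDerivAt (fun t : ℝ => a e + t * b e) (b e) 0 := by
        simpa using ((hasDerivAt_id (0:ℝ)).mul_const (b e)).const_add (a e)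
      have h2 := Real.hasDerivAt_rpow_const (x := a e + 0 * b e) (p := q) (Or.inr hq.le)
      have h3 := h2.comp 0 h1
      simp only [zero_mul, add_zero] at h3
      exact h3
    have hdsum : HasDerivAt (fun t : ℝ => ∑ e, σ e * (a e + t * b e) ^ q)
        (∑ e, σ e * (q * a e ^ (q - 1) * b e)) 0 :=
      HasDerivAt.fun_sum fun e _ => (hder e).const_mul (σ e)
    have hD0 : HasDerivAt (fun t : ℝ =>
        ((∑ j, lamstar j) + t) - (p - 1) * ∑ e, σ e * (a e + t * b e) ^ q)
        (1 - (p - 1) * ∑ e, σ e * (q * a e ^ (q - 1) * b e)) 0 := by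
      have h1 : HasDerivAt (fun t : ℝ => (∑ j, lamstar j) + t) 1 0 := by
        simpa using (hasDerivAt_id (0:ℝ)).const_add (∑ j, lamstar j)
      exact h1.sub (hdsum.const_mul (p - 1))
    have hval : (p - 1) * ∑ e, σ e * (q * a e ^ (q - 1) * b e) = ∑ e, N i e * ρ e := by
      rw [Finset.mul_sum]
      apply Finset.sum_congr rfl
      intro e _
      have hσe : σ e ≠ 0 := (hσ e).ne'
      have hpq : (p - 1) * q = p := by rw [hq_def]; field_simp
      have h4 : (p - 1) * (σ e * (q * a e ^ (q - 1) * b e))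
          = ((p - 1) * q) * (a e ^ (q - 1) * N i e) * (σ e * (1 / (p * σ e))) := by
        rw [hb_def]; ring
      rw [h4, hpq]
      have h5 : σ e * (1 / (p * σ e)) = 1 / p := by field_simp
      rw [h5, hρ_def]
      field_simp
    have hD : HasDerivAt (fun t : ℝ => dualObj σ p N (φ t)) (1 - ∑ e, N i e * ρ e) 0 := by
      rw [← hval]
      exact hD0.congr_of_eventuallyEq (Eventually.of_forall fun t => hrepr t)
    have hub : ∀ t : ℝ, 0 ≤ t → dualObj σ p N (φ t) ≤ dualObj σ p N (φ 0) := by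
      intro t ht
      rw [hφ0]
      exact hmax (φ t) (hφnn t (by linarith [h0 i]))
    have h6 : 1 - ∑ e, N i e * ρ e ≤ 0 := deriv_nonpos_of_max_right hD hub
    refine ⟨by linarith, fun hpos => ?_⟩
    have hub2 : ∀ t : ℝ, -(lamstar i) ≤ t → t ≤ 0 → dualObj σ p N (φ t) ≤ dualObj σ p N (φ 0) := by
      intro t ht _
      rw [hφ0]
      exact hmax (φ t) (hφnn t ht)
    have h7 : 0 ≤ 1 - ∑ e, N i e * ρ e :=
      deriv_nonneg_of_max_left (neg_lt_zero.mpr hpos) hD hub2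
    linarith
  -- value identity
  have hcs : ∑ j, lamstar j = ∑ j, lamstar j * ∑ e, N j e * ρ e := by
    apply Finset.sum_congr rfl
    intro j _
    rcases (h0 j).lt_or_eq with hj | hj
    · rw [(key j).2 hj, mul_one]
    · rw [← hj, zero_mul]
  have hswap : ∑ j, lamstar j * ∑ e, N j e * ρ e = ∑ e, (∑ j, lamstar j * N j e) * ρ e := by
    simp only [Finset.mul_sum, Finset.sum_mul]
    rw [Finset.sum_comm]
    apply Finset.sum_congr rfl; intro e _
    apply Finset.sum_congr rfl; intro j _
    ring
  have haq : ∀ e, (∑ j, lamstar j * N j e) * ρ e = p * σ e * a e ^ q := by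
    intro e
    have hσe := hσ e
    have hpσ : p * σ e ≠ 0 := by positivity
    have hT : p * σ e * a e = ∑ j, lamstar j * N j e := by
      show p * σ e * ((1 / (p * σ e)) * ∑ j, lamstar j * N j e) = _
      rw [← mul_assoc, mul_one_div, div_self hpσ, one_mul]
    have : a e * a e ^ (q - 1) = a e ^ q := by
      rcases (ha e).lt_or_eq with h | h
      · rw [← Real.rpow_one_add' (le_of_lt h) (by linarith), add_sub_cancel]
      · rw [← h, Real.zero_rpow (by linarith : q - 1 ≠ 0), Real.zero_rpow hq0.ne', mul_zero]
    rw [← hT, hρ_def]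
    rw [← this]; ring
  have hsum_lam : ∑ j, lamstar j = p * ∑ e, σ e * a e ^ q := by
    rw [hcs, hswap, Finset.mul_sum]
    apply Finset.sum_congr rfl
    intro e _
    rw [haq e]; ring
  have hen : ∀ e, σ e * |ρ e| ^ p = σ e * a e ^ q := by
    intro e
    rw [abs_of_nonneg (hρ0 e), hρ_def, ← Real.rpow_mul (ha e)]
    congr 2
    rw [hq_def]; field_simp; ring
  refine ⟨ρ, hρ0, fun i => (key i).1, ?_⟩
  have : dualObj σ p N lamstar = (∑ j, lamstar j) - (p-1) * ∑ e, σ e * a e ^ q := rfl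
  rw [this, hsum_lam]
  rw [Finset.sum_congr rfl fun e _ => hen e]
  ring

lemma weak_duality {E ι : Type*} [Fintype E] [Fintype ι]
    (σ : E → ℝ) (hσ : ∀ e, 0 < σ e) (p : ℝ) (hp : 1 < p)
    (N : ι → E → ℝ) (hN : ∀ i e, 0 ≤ N i e) (S : Set ι)
    (lam : ι → ℝ) (hlam : ∀ i, 0 ≤ lam i) (hsupp : ∀ i ∉ S, lam i = 0)
    (ρ : E → ℝ) (hρ : ∀ e, 0 ≤ ρ e) (hadm : ∀ i ∈ S, 1 ≤ ∑ e, N i e * ρ e) :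
    dualObj σ p N lam ≤ ∑ e, σ e * |ρ e| ^ p := by
  have hp0 : (0:ℝ) < p := by linarith
  set q : ℝ := p / (p - 1) with hq_def
  have hpq : p.HolderConjugate q := Real.HolderConjugate.conjExponent hp
  have h1 : ∑ i, lam i ≤ ∑ i, lam i * ∑ e, N i e * ρ e := by
    apply Finset.sum_le_sum
    intro i _
    by_cases hi : i ∈ S
    · exact le_mul_of_one_le_right (hlam i) (hadm i hi)
    · rw [hsupp i hi, zero_mul]
  have hswap : ∑ i, lam i * ∑ e, N i e * ρ e = ∑ e, (∑ i, lam i * N i e) * ρ e := by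
    simp only [Finset.mul_sum, Finset.sum_mul]
    rw [Finset.sum_comm]
    exact Finset.sum_congr rfl fun e _ => Finset.sum_congr rfl fun i _ => by ring
  have h2 : ∀ e, (∑ i, lam i * N i e) * ρ e ≤
      σ e * |ρ e| ^ p + (p - 1) * (σ e * ((1 / (p * σ e)) * ∑ i, lam i * N i e) ^ q) := by
    intro e
    have hσe := hσ e
    set u : ℝ := (1 / (p * σ e)) * ∑ i, lam i * N i e with hu_def
    have hu : 0 ≤ u := by
      apply mul_nonneg (by positivity)
      exact Finset.sum_nonneg fun i _ => mul_nonneg (hlam i) (hN i e)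
    have hT : ∑ i, lam i * N i e = p * σ e * u := by
      rw [hu_def, ← mul_assoc, mul_one_div, div_self (by positivity : p * σ e ≠ 0), one_mul]
    have hy := Real.young_inequality_of_nonneg (hρ e) hu hpq
    have habs : |ρ e| ^ p = ρ e ^ p := by rw [abs_of_nonneg (hρ e)]
    rw [hT, habs]
    have hq0 : q ≠ 0 := hpq.symm.ne_zero
    have hpdq : p * σ e / q = (p - 1) * σ e := by
      rw [hq_def]; field_simp
    calc p * σ e * u * ρ e = (p * σ e) * (ρ e * u) := by ring
      _ ≤ (p * σ e) * (ρ e ^ p / p + u ^ q / q) := by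
          apply mul_le_mul_of_nonneg_left hy (by positivity)
      _ = σ e * ρ e ^ p + (p * σ e / q) * u ^ q := by field_simp
      _ = σ e * ρ e ^ p + (p - 1) * (σ e * u ^ q) := by rw [hpdq]; ring
  have h3 : ∑ e, (∑ i, lam i * N i e) * ρ e ≤
      (∑ e, σ e * |ρ e| ^ p) +
        (p - 1) * ∑ e, σ e * ((1 / (p * σ e)) * ∑ i, lam i * N i e) ^ q := by
    rw [Finset.mul_sum, ← Finset.sum_add_distrib]
    exact Finset.sum_le_sum fun e _ => h2 e
  have := h1.trans (le_of_eq hswap) |>.trans h3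
  unfold dualObj
  linarith

lemma mod_le_energy {E ι : Type*} [Fintype E]
    (σ : E → ℝ) (hσ : ∀ e, 0 < σ e) (p : ℝ)
    (N : ι → E → ℝ) (S : Set ι)
    (ρ : E → ℝ) (hρ : ∀ e, 0 ≤ ρ e) (hadm : ∀ i ∈ S, 1 ≤ ∑ e, N i e * ρ e) :
    pModOn σ p N S ≤ ∑ e, σ e * |ρ e| ^ p := by
  apply csInf_le
  · refine ⟨0, fun x hx => ?_⟩
    obtain ⟨ρ', _, _, rfl⟩ := hx
    exact Finset.sum_nonneg fun e _ => mul_nonneg (hσ e).le (Real.rpow_nonneg (abs_nonneg _) _)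
  · exact ⟨ρ, hρ, hadm, rfl⟩

lemma dual_le_mod {E ι : Type*} [Fintype E] [Fintype ι]
    (σ : E → ℝ) (hσ : ∀ e, 0 < σ e) (p : ℝ) (hp : 1 < p)
    (N : ι → E → ℝ) (hN : ∀ i e, 0 ≤ N i e) (hNz : ∀ i, N i ≠ 0) (S : Set ι)
    (lam : ι → ℝ) (hlam : ∀ i, 0 ≤ lam i) (hsupp : ∀ i ∉ S, lam i = 0) :
    dualObj σ p N lam ≤ pModOn σ p N S := by
  have hw : ∀ i : ι, 0 < ∑ e, N i e := by
    intro i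
    have : ∃ e, N i e ≠ 0 := by
      by_contra h
      push_neg at h
      exact hNz i (funext h)
    obtain ⟨e, he⟩ := this
    exact Finset.sum_pos' (fun e _ => hN i e) ⟨e, Finset.mem_univ e, (hN i e).lt_of_ne (Ne.symm he)⟩
  apply le_csInf
  · set c : ℝ := ∑ j : ι, (∑ e, N j e)⁻¹ with hc_def
    have hc : ∀ i : ι, (∑ e, N i e)⁻¹ ≤ c :=
      fun i => Finset.single_le_sum (f := fun j => (∑ e, N j e)⁻¹)
        (fun j _ => (inv_nonneg).mpr (hw j).le) (Finset.mem_univ i)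
    have hc0 : 0 ≤ c := Finset.sum_nonneg fun j _ => (inv_nonneg).mpr (hw j).le
    refine ⟨∑ e, σ e * |(fun _ => c) e| ^ p, (fun _ => c), fun e => hc0, fun i _ => ?_, rfl⟩
    have : (∑ e, N i e)⁻¹ * (∑ e, N i e) = 1 := inv_mul_cancel₀ (hw i).ne'
    calc (1:ℝ) = (∑ e, N i e)⁻¹ * (∑ e, N i e) := this.symm
      _ ≤ c * ∑ e, N i e := mul_le_mul_of_nonneg_right (hc i) (Finset.sum_nonneg fun e _ => hN i e)
      _ = ∑ e, N i e * c := by rw [mul_comm, Finset.sum_mul]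
  · rintro x ⟨ρ, hρ, hadm, rfl⟩
    exact weak_duality σ hσ p hp N hN S lam hlam hsupp ρ hρ hadm

lemma exists_dual_max {E ι : Type*} [Fintype E] [Fintype ι] [Nonempty ι]
    (σ : E → ℝ) (hσ : ∀ e, 0 < σ e) (p : ℝ) (hp : 1 < p)
    (N : ι → E → ℝ) (hN : ∀ i e, 0 ≤ N i e) (hNz : ∀ i, N i ≠ 0) :
    ∃ lamstar : ι → ℝ, (∀ i, 0 ≤ lamstar i) ∧
      ∀ lam : ι → ℝ, (∀ i, 0 ≤ lam i) → dualObj σ p N lam ≤ dualObj σ p N lamstar := by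
  have hp1 : (0:ℝ) < p - 1 := by linarith
  have hp0 : (0:ℝ) < p := by linarith
  set q : ℝ := p / (p - 1) with hq_def
  have hq : 1 < q := (one_lt_div hp1).mpr (by linarith)
  have hq0 : 0 < q := by linarith
  -- nonempty E
  haveI hE : Nonempty E := by
    by_contra h
    rw [not_nonempty_iff] at h
    exact hNz (Classical.arbitrary ι) (funext fun e => (h.false e).elim)
  -- row sums positive
  have hw : ∀ i : ι, 0 < ∑ e, N i e := by
    intro i
    have : ∃ e, N i e ≠ 0 := by
      by_contra h; push_neg at h; exact hNz i (funext h)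
    obtain ⟨e, he⟩ := this
    exact Finset.sum_pos' (fun e _ => hN i e) ⟨e, Finset.mem_univ e, (hN i e).lt_of_ne (Ne.symm he)⟩
  -- constants
  set n : ℝ := (Fintype.card E : ℝ) with hn_def
  have hn : 0 < n := by
    rw [hn_def]; exact_mod_cast Fintype.card_pos
  set B : ℝ := ∑ e, σ e with hB_def
  have hB : 0 < B := Finset.sum_pos (fun e _ => hσ e) Finset.univ_nonempty
  have hσB : ∀ e, σ e ≤ B :=
    fun e => Finset.single_le_sum (fun e _ => (hσ e).le) (Finset.mem_univ e)
  set wmin : ℝ := Finset.inf' Finset.univ ⟨Classical.arbitrary ι, Finset.mem_univ _⟩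
      (fun i => ∑ e, N i e) with hwmin_def
  have hwmin : 0 < wmin := by
    rw [hwmin_def]
    exact (Finset.lt_inf'_iff _).mpr fun i _ => hw i
  have hwmin_le : ∀ i : ι, wmin ≤ ∑ e, N i e :=
    fun i => Finset.inf'_le _ (Finset.mem_univ i)
  set σm : ℝ := Finset.inf' Finset.univ ⟨Classical.arbitrary E, Finset.mem_univ _⟩ σ with hσm_def
  have hσm : 0 < σm := by
    rw [hσm_def]; exact (Finset.lt_inf'_iff _).mpr fun e _ => hσ e
  have hσm_le : ∀ e, σm ≤ σ e := fun e => Finset.inf'_le _ (Finset.mem_univ e)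
  set c₁ : ℝ := wmin / (p * B * n) with hc₁_def
  have hc₁ : 0 < c₁ := by rw [hc₁_def]; positivity
  set C : ℝ := (p - 1) * σm * c₁ ^ q with hC_def
  have hC : 0 < C := by
    rw [hC_def]
    have := Real.rpow_pos_of_pos hc₁ q
    positivity
  -- coercivity
  have hcoer : ∀ lam : ι → ℝ, (∀ i, 0 ≤ lam i) →
      dualObj σ p N lam ≤ (∑ i, lam i) - C * (∑ i, lam i) ^ q := by
    intro lam hlam
    set s : ℝ := ∑ i, lam i with hs_def
    have hs0 : 0 ≤ s := Finset.sum_nonneg fun i _ => hlam i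
    set T : E → ℝ := fun e => ∑ i, lam i * N i e with hT_def
    have hT0 : ∀ e, 0 ≤ T e :=
      fun e => Finset.sum_nonneg fun i _ => mul_nonneg (hlam i) (hN i e)
    set u : E → ℝ := fun e => (1 / (p * σ e)) * T e with hu_def
    have hu0 : ∀ e, 0 ≤ u e := by
      intro e; have := hσ e
      exact mul_nonneg (by positivity) (hT0 e)
    have hTs : wmin * s ≤ ∑ e, T e := by
      have h1 : ∑ e, T e = ∑ i, lam i * ∑ e, N i e := by
        rw [hT_def, Finset.sum_comm]
        exact Finset.sum_congr rfl fun i _ => by rw [Finset.mul_sum]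
      rw [h1, hs_def, Finset.mul_sum]
      apply Finset.sum_le_sum
      intro i _
      calc wmin * lam i ≤ (∑ e, N i e) * lam i :=
            mul_le_mul_of_nonneg_right (hwmin_le i) (hlam i)
        _ = lam i * ∑ e, N i e := by ring
    have hus : n * (c₁ * s) ≤ ∑ e, u e := by
      have h2 : ∀ e, (1 / (p * B)) * T e ≤ u e := by
        intro e
        have hσe := hσ e
        apply mul_le_mul_of_nonneg_right _ (hT0 e)
        apply one_div_le_one_div_of_le (by positivity)
        exact mul_le_mul_of_nonneg_left (hσB e) hp0.le
      calc n * (c₁ * s) = (1 / (p * B)) * (wmin * s) := by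
            rw [hc₁_def]; field_simp
        _ ≤ (1 / (p * B)) * ∑ e, T e :=
            mul_le_mul_of_nonneg_left hTs (by positivity)
        _ = ∑ e, (1 / (p * B)) * T e := by rw [Finset.mul_sum]
        _ ≤ ∑ e, u e := Finset.sum_le_sum fun e _ => h2 e
    obtain ⟨estar, _, hestar⟩ : ∃ e ∈ Finset.univ, c₁ * s ≤ u e := by
      apply Finset.exists_le_of_sum_le Finset.univ_nonempty
      calc ∑ _e : E, c₁ * s = n * (c₁ * s) := by
            rw [Finset.sum_const, nsmul_eq_mul, Finset.card_univ, hn_def]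
        _ ≤ ∑ e, u e := hus
    have hmain : C * s ^ q ≤ (p - 1) * ∑ e, σ e * u e ^ q := by
      have h3 : σm * (c₁ * s) ^ q ≤ σ estar * u estar ^ q := by
        apply mul_le_mul (hσm_le estar)
          (Real.rpow_le_rpow (by positivity) hestar hq0.le)
          (Real.rpow_nonneg (by positivity) q) (hσ estar).le
      have h4 : σ estar * u estar ^ q ≤ ∑ e, σ e * u e ^ q :=
        Finset.single_le_sum
          (fun e _ => mul_nonneg (hσ e).le (Real.rpow_nonneg (hu0 e) q))
          (Finset.mem_univ estar)
      have h5 : C * s ^ q = (p - 1) * (σm * (c₁ * s) ^ q) := by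
        rw [hC_def, Real.mul_rpow hc₁.le hs0]; ring
      rw [h5]
      exact mul_le_mul_of_nonneg_left (h3.trans h4) hp1.le
    unfold dualObj
    rw [← hs_def]
    have hrw : ∑ e, σ e * ((1 / (p * σ e)) * ∑ i, lam i * N i e) ^ q = ∑ e, σ e * u e ^ q := rfl
    rw [hrw]
    linarith [hmain]
  -- compact set
  set S₀ : ℝ := max 1 ((2 / C) ^ (q - 1)⁻¹) with hS₀_def
  have hS₀1 : (1:ℝ) ≤ S₀ := le_max_left _ _
  have hS₀0 : (0:ℝ) ≤ S₀ := by linarith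
  set K : Set (ι → ℝ) := {lam | (∀ i, 0 ≤ lam i) ∧ ∑ i, lam i ≤ S₀} with hK_def
  have hKsub : K ⊆ Set.pi Set.univ (fun _ : ι => Icc (0:ℝ) S₀) := by
    rintro lam ⟨h1, h2⟩ i _
    refine ⟨h1 i, ?_⟩
    calc lam i ≤ ∑ j, lam j := Finset.single_le_sum (fun j _ => h1 j) (Finset.mem_univ i)
      _ ≤ S₀ := h2
  have hKclosed : IsClosed K := by
    have h1 : IsClosed {lam : ι → ℝ | ∀ i, 0 ≤ lam i} := by
      have : {lam : ι → ℝ | ∀ i, 0 ≤ lam i} = ⋂ i, {lam : ι → ℝ | 0 ≤ lam i} := by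
        ext lam; simp
      rw [this]
      exact isClosed_iInter fun i => isClosed_le continuous_const (continuous_apply i)
    have h2 : IsClosed {lam : ι → ℝ | ∑ i, lam i ≤ S₀} :=
      isClosed_le (continuous_finset_sum _ fun i _ => continuous_apply i) continuous_const
    exact h1.inter h2
  have hKcompact : IsCompact K :=
    (isCompact_univ_pi fun _ => isCompact_Icc).of_isClosed_subset hKclosed hKsub
  have hKne : K.Nonempty := by
    refine ⟨fun _ => 0, fun i => le_refl 0, ?_⟩
    simpa using hS₀0
  -- continuity
  have hcont : Continuous (dualObj σ p N : (ι → ℝ) → ℝ) := by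
    unfold dualObj
    apply Continuous.sub
    · exact continuous_finset_sum _ fun i _ => continuous_apply i
    · apply Continuous.mul continuous_const
      apply continuous_finset_sum
      intro e _
      apply Continuous.mul continuous_const
      exact (Real.continuous_rpow_const hq0.le).comp
        (continuous_const.mul
          (continuous_finset_sum _ fun i _ => (continuous_apply i).mul continuous_const))
  obtain ⟨lamstar, hmem, hmaxK⟩ := hKcompact.exists_isMaxOn hKne hcont.continuousOn
  have hzero : dualObj σ p N (fun _ => 0) = 0 := by
    have hq' : p / (p - 1) ≠ 0 := hq0.ne'
    simp [dualObj, Real.zero_rpow hq']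
  refine ⟨lamstar, hmem.1, ?_⟩
  intro lam hlam
  by_cases hs : ∑ i, lam i ≤ S₀
  · exact hmaxK ⟨hlam, hs⟩
  · push_neg at hs
    have hg0 : dualObj σ p N (fun _ => 0) ≤ dualObj σ p N lamstar := by
      apply hmaxK
      refine ⟨fun i => le_refl 0, ?_⟩
      simpa using hS₀0
    set s : ℝ := ∑ i, lam i with hs_def
    have hs1 : 1 < s := lt_of_le_of_lt hS₀1 hs
    have hs0 : 0 < s := by linarith
    have hq1ne : q - 1 ≠ 0 := by linarith
    have hpow : 2 / C ≤ s ^ (q - 1) := by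
      have h1 : (2 / C) ^ (q - 1)⁻¹ ≤ S₀ := le_max_right _ _
      have h2 : ((2 / C) ^ (q - 1)⁻¹) ^ (q - 1) ≤ s ^ (q - 1) :=
        Real.rpow_le_rpow (Real.rpow_nonneg (by positivity) _) (h1.trans hs.le) (by linarith)
      rwa [← Real.rpow_mul (by positivity), inv_mul_cancel₀ hq1ne, Real.rpow_one] at h2
    have hsq : s ^ q = s ^ (q - 1) * s := by
      rw [← Real.rpow_add_one hs0.ne' (q - 1)]
      congr 1
      ring
    have h6 : 2 * s ≤ C * s ^ q := by
      rw [hsq, ← mul_assoc]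
      have : 2 * s = (C * (2 / C)) * s := by field_simp
      rw [this]
      apply mul_le_mul_of_nonneg_right _ hs0.le
      exact mul_le_mul_of_nonneg_left hpow hC.le
    have h7 := hcoer lam hlam
    calc dualObj σ p N lam ≤ s - C * s ^ q := by rw [hs_def]; exact h7
      _ ≤ s - 2 * s := by linarith
      _ ≤ 0 := by linarith
      _ = dualObj σ p N (fun _ => 0) := hzero.symm
      _ ≤ dualObj σ p N lamstar := hg0

/-- if `Γ` itself is a minimal family, the optimal dual variable is
unique. -/
theorem stmt13 {E ι : Type*} [Fintype E] [Fintype ι]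
    (σ : E → ℝ) (hσ : ∀ e, 0 < σ e)
    (p : ℝ) (hp : 1 < p)
    (N : ι → E → ℝ) (hN : ∀ i e, 0 ≤ N i e) (hNz : ∀ i, N i ≠ 0)
    (hmin : ∀ i : ι,
      pModOn σ p N (Set.univ \ {i}) < pModOn σ p N (Set.univ : Set ι)) :
    ∃! lamstar : ι → ℝ, (∀ i, 0 ≤ lamstar i) ∧
      ∀ lam : ι → ℝ, (∀ i, 0 ≤ lam i) → dualObj σ p N lam ≤ dualObj σ p N lamstar := by
  classical
  by_cases hι : Nonempty ι
  swap
  · haveI : IsEmpty ι := not_nonempty_iff.mp hι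
    refine ⟨fun _ => 0, ⟨fun i => le_rfl, fun lam _ => ?_⟩, fun y _ => ?_⟩
    · have hl : lam = fun _ => 0 := funext fun i => (IsEmpty.false i).elim
      rw [hl]
    · exact funext fun i => (IsEmpty.false i).elim
  haveI := hι
  have hp1 : (0:ℝ) < p - 1 := by linarith
  have hp0 : (0:ℝ) < p := by linarith
  set q : ℝ := p / (p - 1) with hq_def
  have hq : 1 < q := (one_lt_div hp1).mpr (by linarith)
  have hq0 : 0 < q := by linarith
  obtain ⟨lamstar, hls0, hlsmax⟩ := exists_dual_max σ hσ p hp N hN hNz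
  refine ⟨lamstar, ⟨hls0, hlsmax⟩, ?_⟩
  rintro y ⟨hy0, hymax⟩
  by_contra hne
  have hgeq : dualObj σ p N y = dualObj σ p N lamstar :=
    le_antisymm (hlsmax y hy0) (hymax lamstar hls0)
  have hdual_eq : ∀ lam : ι → ℝ, dualObj σ p N lam =
      ∑ i, lam i - (p - 1) * ∑ e, σ e * ((1 / (p * σ e)) * ∑ i, lam i * N i e) ^ q :=
    fun _ => rfl
  -- Step 1: the two maximizers induce the same `N^T λ`.
  have hTsame : ∀ e, ∑ i, y i * N i e = ∑ i, lamstar i * N i e := by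
    by_contra hTne
    push_neg at hTne
    obtain ⟨e₀, he₀⟩ := hTne
    set m : ι → ℝ := fun i => (y i + lamstar i) / 2 with hm_def
    have hm0 : ∀ i, 0 ≤ m i := fun i => by
      have := hy0 i; have := hls0 i; rw [hm_def]; dsimp only; linarith
    have hmle : dualObj σ p N m ≤ dualObj σ p N lamstar := hlsmax m hm0
    have hTm : ∀ e, ∑ i, m i * N i e =
        ((∑ i, y i * N i e) + ∑ i, lamstar i * N i e) / 2 := by
      intro e
      rw [← Finset.sum_add_distrib, Finset.sum_div]
      exact Finset.sum_congr rfl fun i _ => by rw [hm_def]; ring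
    set uy : E → ℝ := fun e => (1 / (p * σ e)) * ∑ i, y i * N i e with huy_def
    set ul : E → ℝ := fun e => (1 / (p * σ e)) * ∑ i, lamstar i * N i e with hul_def
    have huy0 : ∀ e, 0 ≤ uy e := fun e => by
      have := hσ e
      exact mul_nonneg (by positivity)
        (Finset.sum_nonneg fun i _ => mul_nonneg (hy0 i) (hN i e))
    have hul0 : ∀ e, 0 ≤ ul e := fun e => by
      have := hσ e
      exact mul_nonneg (by positivity)
        (Finset.sum_nonneg fun i _ => mul_nonneg (hls0 i) (hN i e))
    have hum : ∀ e, (1 / (p * σ e)) * ∑ i, m i * N i e = (uy e + ul e) / 2 := by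
      intro e
      rw [hTm e, huy_def, hul_def]
      ring
    -- convexity inequalities
    have hconv : ∀ e, σ e * ((uy e + ul e) / 2) ^ q ≤
        (σ e * uy e ^ q + σ e * ul e ^ q) / 2 := by
      intro e
      have h := (convexOn_rpow hq.le).2 (mem_Ici.mpr (huy0 e)) (mem_Ici.mpr (hul0 e))
        (by norm_num : (0:ℝ) ≤ 1/2) (by norm_num : (0:ℝ) ≤ 1/2) (by norm_num)
      simp only [smul_eq_mul] at h
      have h2 : (uy e + ul e) / 2 = 1/2 * uy e + 1/2 * ul e := by ring
      rw [h2]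
      have := mul_le_mul_of_nonneg_left h (hσ e).le
      calc σ e * (1/2 * uy e + 1/2 * ul e) ^ q
          ≤ σ e * (1/2 * uy e ^ q + 1/2 * ul e ^ q) := this
        _ = (σ e * uy e ^ q + σ e * ul e ^ q) / 2 := by ring
    have hstrict : σ e₀ * ((uy e₀ + ul e₀) / 2) ^ q <
        (σ e₀ * uy e₀ ^ q + σ e₀ * ul e₀ ^ q) / 2 := by
      have hne' : uy e₀ ≠ ul e₀ := by
        rw [huy_def, hul_def]
        intro hcontra
        apply he₀
        have hpσ : (1 : ℝ) / (p * σ e₀) ≠ 0 := by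
          have := hσ e₀; positivity
        exact mul_left_cancel₀ hpσ hcontra
      have h := (strictConvexOn_rpow hq).2 (mem_Ici.mpr (huy0 e₀)) (mem_Ici.mpr (hul0 e₀))
        hne' (by norm_num : (0:ℝ) < 1/2) (by norm_num : (0:ℝ) < 1/2) (by norm_num)
      simp only [smul_eq_mul] at h
      have h2 : (uy e₀ + ul e₀) / 2 = 1/2 * uy e₀ + 1/2 * ul e₀ := by ring
      rw [h2]
      have := mul_lt_mul_of_pos_left h (hσ e₀)
      calc σ e₀ * (1/2 * uy e₀ + 1/2 * ul e₀) ^ q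
          < σ e₀ * (1/2 * uy e₀ ^ q + 1/2 * ul e₀ ^ q) := this
        _ = (σ e₀ * uy e₀ ^ q + σ e₀ * ul e₀ ^ q) / 2 := by ring
    have hsumlt : ∑ e, σ e * ((uy e + ul e) / 2) ^ q <
        ((∑ e, σ e * uy e ^ q) + ∑ e, σ e * ul e ^ q) / 2 := by
      rw [← Finset.sum_add_distrib, Finset.sum_div]
      exact Finset.sum_lt_sum (fun e _ => (hconv e).trans (le_of_eq (by ring)))
        ⟨e₀, Finset.mem_univ e₀, hstrict.trans_le (le_of_eq (by ring))⟩
    -- expand dualObj at m, y, lamstar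
    have hgm := hdual_eq m
    have hgy := hdual_eq y
    have hgl := hdual_eq lamstar
    have hsm : ∑ i, m i = ((∑ i, y i) + ∑ i, lamstar i) / 2 := by
      rw [← Finset.sum_add_distrib, Finset.sum_div]
    have hXm : ∑ e, σ e * ((1 / (p * σ e)) * ∑ i, m i * N i e) ^ q
        = ∑ e, σ e * ((uy e + ul e) / 2) ^ q :=
      Finset.sum_congr rfl fun e _ => by rw [hum e]
    have hXy : ∑ e, σ e * ((1 / (p * σ e)) * ∑ i, y i * N i e) ^ q
        = ∑ e, σ e * uy e ^ q := rfl
    have hXl : ∑ e, σ e * ((1 / (p * σ e)) * ∑ i, lamstar i * N i e) ^ q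
        = ∑ e, σ e * ul e ^ q := rfl
    rw [hgm, hsm, hXm] at hmle
    rw [hgy, hXy] at hgeq
    rw [hgl, hXl] at hgeq hmle
    have hmul := mul_lt_mul_of_pos_left hsumlt hp1
    linarith
  -- Step 2: equal coordinate sums
  have hXeq : ∑ e, σ e * ((1 / (p * σ e)) * ∑ i, y i * N i e) ^ q
      = ∑ e, σ e * ((1 / (p * σ e)) * ∑ i, lamstar i * N i e) ^ q :=
    Finset.sum_congr rfl fun e _ => by rw [hTsame e]
  have hsum_same : ∑ i, y i = ∑ i, lamstar i := by
    have h1 := hdual_eq y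
    have h2 := hdual_eq lamstar
    rw [h1, h2, hXeq] at hgeq
    linarith
  -- Step 3: find a negative coordinate of c = y - lamstar
  have hcsum : ∑ i, (y i - lamstar i) = 0 := by
    rw [Finset.sum_sub_distrib]; linarith
  have hex : ∃ k, y k < lamstar k := by
    by_contra h
    push_neg at h
    apply hne
    funext i
    have h' : ∀ i ∈ Finset.univ, (0:ℝ) ≤ y i - lamstar i := fun i _ => by
      have := h i; linarith
    have hall := (Finset.sum_eq_zero_iff_of_nonneg h').mp hcsum i (Finset.mem_univ i)
    linarith
  obtain ⟨k, hk⟩ := hex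
  set F : Finset ι := Finset.univ.filter (fun j => y j < lamstar j) with hF_def
  have hFne : F.Nonempty := ⟨k, by simp [hF_def, hk]⟩
  set t₀ : ℝ := F.inf' hFne (fun j => y j / (lamstar j - y j)) with ht₀_def
  have ht₀0 : 0 ≤ t₀ := by
    rw [ht₀_def]
    apply Finset.le_inf'
    intro j hj
    have hj' : y j < lamstar j := by
      simpa [hF_def] using hj
    exact div_nonneg (hy0 j) (by linarith)
  obtain ⟨i₀, hi₀F, hi₀⟩ := Finset.exists_mem_eq_inf' hFne (fun j => y j / (lamstar j - y j))
  have hi₀neg : y i₀ < lamstar i₀ := by simpa [hF_def] using hi₀F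
  set lam' : ι → ℝ := fun j => y j + t₀ * (y j - lamstar j) with hlam'_def
  have hlam'0 : ∀ j, 0 ≤ lam' j := by
    intro j
    rw [hlam'_def]
    dsimp only
    by_cases hj : y j < lamstar j
    · have hjF : j ∈ F := by simp [hF_def, hj]
      have hle : t₀ ≤ y j / (lamstar j - y j) := by
        rw [ht₀_def]; exact Finset.inf'_le _ hjF
      have hd : 0 < lamstar j - y j := by linarith
      have : t₀ * (lamstar j - y j) ≤ (y j / (lamstar j - y j)) * (lamstar j - y j) :=
        mul_le_mul_of_nonneg_right hle hd.le
      rw [div_mul_cancel₀ _ hd.ne'] at this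
      nlinarith
    · push_neg at hj
      have := mul_nonneg ht₀0 (by linarith : (0:ℝ) ≤ y j - lamstar j)
      linarith [hy0 j]
  have ht₀eq : t₀ = y i₀ / (lamstar i₀ - y i₀) := by
    rw [ht₀_def]; exact hi₀
  have hlam'i₀ : lam' i₀ = 0 := by
    rw [hlam'_def]
    dsimp only
    rw [ht₀eq]
    have hd : (0:ℝ) < lamstar i₀ - y i₀ := by linarith
    field_simp
    ring
  have hT' : ∀ e, ∑ i, lam' i * N i e = ∑ i, y i * N i e := by
    intro e
    have hterm : ∀ i : ι, lam' i * N i e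
        = y i * N i e + t₀ * (y i * N i e - lamstar i * N i e) := fun i => by
      rw [hlam'_def]; ring
    have h1 : ∑ i, lam' i * N i e =
        (∑ i, y i * N i e) + t₀ * ((∑ i, y i * N i e) - ∑ i, lamstar i * N i e) := by
      rw [Finset.sum_congr rfl fun i _ => hterm i, Finset.sum_add_distrib, ← Finset.mul_sum,
        Finset.sum_sub_distrib]
    rw [h1, hTsame e]
    ring
  have hsum' : ∑ i, lam' i = ∑ i, y i := by
    have hterm : ∀ i : ι, lam' i = y i + t₀ * (y i - lamstar i) := fun i => rfl
    rw [Finset.sum_congr rfl fun i _ => hterm i, Finset.sum_add_distrib, ← Finset.mul_sum, hcsum,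
      mul_zero, add_zero]
  have hg' : dualObj σ p N lam' = dualObj σ p N y := by
    rw [hdual_eq lam', hdual_eq y, hsum']
    congr 2
    exact Finset.sum_congr rfl fun e _ => by rw [hT' e]
  have hsupp : ∀ i ∉ (Set.univ \ {i₀} : Set ι), lam' i = 0 := by
    intro i hi
    have hii : i = i₀ := by
      by_contra hcon
      exact hi ⟨Set.mem_univ i, by simpa using hcon⟩
    rw [hii, hlam'i₀]
  have h1 : dualObj σ p N lam' ≤ pModOn σ p N (Set.univ \ {i₀}) :=
    dual_le_mod σ hσ p hp N hN hNz _ lam' hlam'0 hsupp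
  obtain ⟨ρ, hρ0, hadm, hval⟩ := kkt σ hσ p hp N hN y hy0 (fun lam hl => hymax lam hl)
  have h2 : pModOn σ p N (Set.univ : Set ι) ≤ ∑ e, σ e * |ρ e| ^ p :=
    mod_le_energy σ hσ p N Set.univ ρ hρ0 (fun i _ => hadm i)
  have h3 := hmin i₀
  rw [← hval] at h2
  rw [hg'] at h1
  linarith
end

section
/- (Probabilistic interpretation of 2-modulus) For any finite family Γ of nonzero usage vectors on an unweighted graph, Mod_2(Γ) = ( min_{μ ∈ P(Γ)} μ^T N N^T μ )^{-1}, where P(Γ) is the set of probability mass functions on Γ. -/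
open Finset

section aux

variable {E ι : Type*} [Fintype E] [Fintype ι]

/-- expansion of the quadratic form -/
lemma stmt15_quad_eq (N : ι → E → ℝ) (μ : ι → ℝ) :
    (∑ i, ∑ j, (∑ e, N i e * N j e) * μ i * μ j)
      = ∑ e, (∑ i, μ i * N i e) ^ 2 := by
  calc (∑ i, ∑ j, (∑ e, N i e * N j e) * μ i * μ j)
      = ∑ i, ∑ j, ∑ e, (μ i * N i e) * (μ j * N j e) := by
        refine Finset.sum_congr rfl fun i _ => Finset.sum_congr rfl fun j _ => ?_
        rw [Finset.sum_mul, Finset.sum_mul]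
        exact Finset.sum_congr rfl fun e _ => by ring
    _ = ∑ i, ∑ e, ∑ j, (μ i * N i e) * (μ j * N j e) :=
        Finset.sum_congr rfl fun i _ => Finset.sum_comm
    _ = ∑ e, ∑ i, ∑ j, (μ i * N i e) * (μ j * N j e) := Finset.sum_comm
    _ = ∑ e, (∑ i, μ i * N i e) ^ 2 := by
        refine Finset.sum_congr rfl fun e _ => ?_
        rw [sq]
        exact (Finset.sum_mul_sum Finset.univ Finset.univ _ _).symm

end aux

/-- Probabilistic interpretation of 2-modulus:
`Mod₂(Γ) = (min_{μ ∈ P(Γ)} μᵀ N Nᵀ μ)⁻¹`, the reciprocal of the minimal expected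
overlap of two i.i.d. objects drawn from `μ`. -/
theorem stmt15 {E ι : Type*} [Fintype E] [Fintype ι] [Nonempty ι]
    (N : ι → E → ℝ) (hN : ∀ i e, 0 ≤ N i e) (hNz : ∀ i, N i ≠ 0) :
    sInf {x : ℝ | ∃ ρ : E → ℝ, (∀ e, 0 ≤ ρ e) ∧
        (∀ i, 1 ≤ ∑ e, N i e * ρ e) ∧ x = ∑ e, ρ e ^ 2}
      = (sInf {x : ℝ | ∃ μ : ι → ℝ, (∀ i, 0 ≤ μ i) ∧ (∑ i, μ i = 1) ∧
          x = ∑ i, ∑ j, (∑ e, N i e * N j e) * μ i * μ j})⁻¹ := by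
  classical
  set F : (ι → ℝ) → ℝ := fun μ => ∑ e, (∑ i, μ i * N i e) ^ 2 with hFdef
  -- minimizer on the simplex
  have hne : (stdSimplex ℝ ι).Nonempty := by
    obtain ⟨i₀⟩ := ‹Nonempty ι›
    refine ⟨fun i => if i = i₀ then 1 else 0, fun i => by positivity, ?_⟩
    simp
  have hcont : ContinuousOn F (stdSimplex ℝ ι) := by
    apply Continuous.continuousOn
    apply continuous_finset_sum
    intro e _
    exact (continuous_finset_sum _ fun i _ =>
      (continuous_apply i).mul continuous_const).pow 2
  obtain ⟨μ, hμmem, hμmin⟩ := (isCompact_stdSimplex ℝ ι).exists_isMinOn hne hcont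
  obtain ⟨hμ0, hμ1⟩ : (∀ i, 0 ≤ μ i) ∧ ∑ i, μ i = 1 := hμmem
  set g : E → ℝ := fun e => ∑ i, μ i * N i e with hgdef
  set m : ℝ := F μ with hmdef
  have hg0 : ∀ e, 0 ≤ g e := fun e =>
    Finset.sum_nonneg fun i _ => mul_nonneg (hμ0 i) (hN i e)
  have hm0 : 0 ≤ m := Finset.sum_nonneg fun e _ => sq_nonneg _
  -- m > 0
  have hmpos : 0 < m := by
    obtain ⟨i, hi⟩ : ∃ i, 0 < μ i := by
      by_contra h
      push_neg at h
      have : ∀ i, μ i = 0 := fun i => le_antisymm (h i) (hμ0 i)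
      simp [this] at hμ1
    obtain ⟨e, he⟩ : ∃ e, N i e ≠ 0 := by
      by_contra h
      push_neg at h
      exact hNz i (funext h)
    have hge : 0 < g e := by
      have : 0 < μ i * N i e := mul_pos hi ((hN i e).lt_of_ne (Ne.symm he))
      calc (0:ℝ) < μ i * N i e := this
        _ ≤ g e := Finset.single_le_sum
            (fun k _ => mul_nonneg (hμ0 k) (hN k e)) (Finset.mem_univ i)
    calc (0:ℝ) < g e ^ 2 := by positivity
      _ ≤ m := Finset.single_le_sum (f := fun e => g e ^ 2)
          (fun e _ => sq_nonneg _) (Finset.mem_univ e)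
  -- variational inequality: for every j, m ≤ ∑ e, N j e * g e
  have key : ∀ j, m ≤ ∑ e, N j e * g e := by
    intro j
    set h : E → ℝ := fun e => N j e - g e with hhdef
    set B : ℝ := ∑ e, g e * h e with hBdef
    set Q : ℝ := ∑ e, h e ^ 2 with hQdef
    have hquad : ∀ t : ℝ, t ∈ Set.Ioc (0:ℝ) 1 → 0 ≤ 2 * B + t * Q := by
      intro t ⟨ht0, ht1⟩
      set ν : ι → ℝ := fun i => μ i + t * ((if i = j then 1 else 0) - μ i) with hνdef
      have hνmem : ν ∈ stdSimplex ℝ ι := by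
        constructor
        · intro i
          have : ν i = (1 - t) * μ i + t * (if i = j then 1 else 0) := by
            simp only [hνdef]; ring
          rw [this]
          have hite : (0:ℝ) ≤ if i = j then 1 else 0 := by split_ifs <;> norm_num
          have h1t : (0:ℝ) ≤ 1 - t := by linarith
          exact add_nonneg (mul_nonneg h1t (hμ0 i)) (mul_nonneg ht0.le hite)
        · show ∑ i, ν i = 1
          simp only [hνdef]
          rw [Finset.sum_add_distrib, hμ1, ← Finset.mul_sum,
            Finset.sum_sub_distrib, hμ1]
          simp
      have hFν : F ν = m + t * (2 * B + t * Q) := by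
        have hinner : ∀ e, (∑ i, ν i * N i e) = g e + t * h e := by
          intro e
          simp only [hνdef, hhdef, hgdef]
          have : ∀ i, (μ i + t * ((if i = j then 1 else 0) - μ i)) * N i e
              = μ i * N i e + t * ((if i = j then 1 else 0) * N i e - μ i * N i e) := by
            intro i; ring
          rw [Finset.sum_congr rfl fun i _ => this i, Finset.sum_add_distrib]
          congr 1
          rw [← Finset.mul_sum]
          congr 1
          rw [Finset.sum_sub_distrib]
          congr 1
          simp
        show (∑ e, (∑ i, ν i * N i e) ^ 2) = m + t * (2 * B + t * Q)
        rw [Finset.sum_congr rfl fun e _ => by rw [hinner e]]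
        have : ∀ e : E, (g e + t * h e) ^ 2
            = g e ^ 2 + (2 * t) * (g e * h e) + t ^ 2 * h e ^ 2 := by
          intro e; ring
        rw [Finset.sum_congr rfl fun e _ => this e]
        rw [Finset.sum_add_distrib, Finset.sum_add_distrib,
          ← Finset.mul_sum, ← Finset.mul_sum]
        simp only [hmdef, hBdef, hQdef, hFdef]
        ring
      have := hμmin hνmem
      simp only [Set.mem_setOf_eq] at this
      rw [hFν] at this
      nlinarith
    have hB : 0 ≤ B := by
      by_contra hB
      push_neg at hB
      rcases le_or_gt Q 0 with hQ | hQ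
      · have := hquad 1 ⟨one_pos, le_refl 1⟩
        nlinarith
      · have ht : min 1 (-B / Q) ∈ Set.Ioc (0:ℝ) 1 := by
          constructor
          · exact lt_min one_pos (div_pos (neg_pos.mpr hB) hQ)
          · exact min_le_left _ _
        have := hquad _ ht
        have hle : min 1 (-B / Q) * Q ≤ (-B / Q) * Q :=
          mul_le_mul_of_nonneg_right (min_le_right _ _) hQ.le
        rw [div_mul_cancel₀ _ (ne_of_gt hQ)] at hle
        linarith
    have : ∑ e, g e * h e = (∑ e, N j e * g e) - m := by
      simp only [hhdef]
      rw [Finset.sum_congr rfl fun e _ => (by ring :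
        g e * (N j e - g e) = N j e * g e - g e ^ 2), Finset.sum_sub_distrib]
    rw [hBdef, this] at hB
    linarith
  -- lower bound: every feasible ρ has energy ≥ m⁻¹
  have hlow : ∀ ρ : E → ℝ, (∀ e, 0 ≤ ρ e) → (∀ i, 1 ≤ ∑ e, N i e * ρ e) →
      m⁻¹ ≤ ∑ e, ρ e ^ 2 := by
    intro ρ hρ0 hρfeas
    have h1 : (1:ℝ) ≤ ∑ e, g e * ρ e := by
      have : (1:ℝ) = ∑ i, μ i := hμ1.symm
      rw [this]
      have step : ∑ i, μ i ≤ ∑ i, μ i * ∑ e, N i e * ρ e := by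
        apply Finset.sum_le_sum
        intro i _
        calc μ i = μ i * 1 := (mul_one _).symm
          _ ≤ μ i * ∑ e, N i e * ρ e :=
            mul_le_mul_of_nonneg_left (hρfeas i) (hμ0 i)
      refine step.trans (le_of_eq ?_)
      simp only [hgdef]
      simp only [Finset.mul_sum, Finset.sum_mul]
      rw [Finset.sum_comm]
      exact Finset.sum_congr rfl fun e _ =>
        Finset.sum_congr rfl fun i _ => by ring
    have hcs : (∑ e, g e * ρ e) ^ 2 ≤ m * ∑ e, ρ e ^ 2 :=
      Finset.sum_mul_sq_le_sq_mul_sq _ _ _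
    have h2 : (1:ℝ) ≤ m * ∑ e, ρ e ^ 2 := by nlinarith
    rw [inv_eq_one_div, div_le_iff₀ hmpos]
    linarith [h2]
  -- the concrete feasible ρ achieving m⁻¹
  set ρ₀ : E → ℝ := fun e => g e / m with hρ₀def
  have hρ₀0 : ∀ e, 0 ≤ ρ₀ e := fun e => div_nonneg (hg0 e) hm0
  have hρ₀feas : ∀ i, 1 ≤ ∑ e, N i e * ρ₀ e := by
    intro i
    simp only [hρ₀def]
    have : ∑ e, N i e * (g e / m) = (∑ e, N i e * g e) / m := by
      rw [Finset.sum_div]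
      exact Finset.sum_congr rfl fun e _ => by ring
    rw [this, le_div_iff₀ hmpos, one_mul]
    exact key i
  have hρ₀en : ∑ e, ρ₀ e ^ 2 = m⁻¹ := by
    simp only [hρ₀def, div_pow]
    rw [← Finset.sum_div]
    rw [hmdef, hFdef]
    have hS : (∑ x, (∑ x_1, μ x_1 * N x_1 x) ^ 2) ≠ 0 := hmpos.ne'
    field_simp
    simp only [hgdef]
  -- compute both sInf's
  have hLHS : sInf {x : ℝ | ∃ ρ : E → ℝ, (∀ e, 0 ≤ ρ e) ∧
      (∀ i, 1 ≤ ∑ e, N i e * ρ e) ∧ x = ∑ e, ρ e ^ 2} = m⁻¹ := by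
    apply le_antisymm
    · apply csInf_le
      · exact ⟨m⁻¹, fun x ⟨ρ, h1, h2, h3⟩ => h3 ▸ hlow ρ h1 h2⟩
      · exact ⟨ρ₀, hρ₀0, hρ₀feas, hρ₀en.symm⟩
    · refine le_csInf ?_ ?_
      · exact ⟨∑ e, ρ₀ e ^ 2, ρ₀, hρ₀0, hρ₀feas, rfl⟩
      · rintro x ⟨ρ, h1, h2, h3⟩
        exact h3 ▸ hlow ρ h1 h2
  have hRHS : sInf {x : ℝ | ∃ μ' : ι → ℝ, (∀ i, 0 ≤ μ' i) ∧ (∑ i, μ' i = 1) ∧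
      x = ∑ i, ∑ j, (∑ e, N i e * N j e) * μ' i * μ' j} = m := by
    apply le_antisymm
    · apply csInf_le
      · refine ⟨0, fun x ⟨μ', h1, h2, h3⟩ => ?_⟩
        rw [h3, stmt15_quad_eq]
        exact Finset.sum_nonneg fun e _ => sq_nonneg _
      · exact ⟨μ, hμ0, hμ1, (stmt15_quad_eq N μ).symm ▸ rfl⟩
    · refine le_csInf ?_ ?_
      · exact ⟨∑ i, ∑ j, (∑ e, N i e * N j e) * μ i * μ j, μ, hμ0, hμ1, rfl⟩
      · rintro x ⟨μ', h1, h2, h3⟩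
        rw [h3, stmt15_quad_eq]
        exact hμmin (⟨h1, h2⟩ : μ' ∈ stdSimplex ℝ ι)
  rw [hLHS, hRHS]
end

section
/- If μ* is optimal for min_{μ ∈ P(Γ)} μ^T N N^T μ and ρ* is the extremal density for Mod_2(Γ), then ρ*(e)/Mod_2(Γ) = (N^T μ*)(e) for all e ∈ E; i.e., the extremal density is proportional to the expected edge usage under μ*. -/
/-- if `μ*` minimizes the expected overlap `μᵀNNᵀμ` over the simplex and
`ρ*` is the extremal density for `Mod₂(Γ)`, then `ρ*(e)/Mod₂(Γ) = (Nᵀμ*)(e)` for all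
edges `e`. -/
theorem stmt16 {E ι : Type*} [Fintype E] [Fintype ι] [Nonempty ι]
    (N : ι → E → ℝ) (hN : ∀ i e, 0 ≤ N i e) (hNz : ∀ i, N i ≠ 0)
    (ρstar : E → ℝ)
    (hρpos : ∀ e, 0 ≤ ρstar e)
    (hρadm : ∀ i, 1 ≤ ∑ e, N i e * ρstar e)
    (hρmin : ∀ ρ : E → ℝ, (∀ e, 0 ≤ ρ e) → (∀ i, 1 ≤ ∑ e, N i e * ρ e) →
      ∑ e, ρstar e ^ 2 ≤ ∑ e, ρ e ^ 2)
    (μstar : ι → ℝ)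
    (hμpos : ∀ i, 0 ≤ μstar i) (hμsum : ∑ i, μstar i = 1)
    (hμmin : ∀ μ : ι → ℝ, (∀ i, 0 ≤ μ i) → (∑ i, μ i = 1) →
      ∑ i, ∑ j, (∑ e, N i e * N j e) * μstar i * μstar j
        ≤ ∑ i, ∑ j, (∑ e, N i e * N j e) * μ i * μ j) :
    ∀ e, ρstar e / (∑ e', ρstar e' ^ 2) = ∑ i, N i e * μstar i := by
  classical
  set f : E → ℝ := fun e => ∑ i, N i e * μstar i with hf
  -- rewrite the quadratic form
  have hQ : ∀ μ : ι → ℝ, ∑ i, ∑ j, (∑ e, N i e * N j e) * μ i * μ j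
      = ∑ e, (∑ i, N i e * μ i) ^ 2 := by
    intro μ
    have h1 : ∀ e : E, (∑ i, N i e * μ i) ^ 2
        = ∑ i, ∑ j, (N i e * μ i) * (N j e * μ j) := by
      intro e; rw [sq, Finset.sum_mul_sum]
    have h2 : ∀ i j : ι, (∑ e, N i e * N j e) * μ i * μ j
        = ∑ e, (N i e * μ i) * (N j e * μ j) := by
      intro i j; rw [Finset.sum_mul, Finset.sum_mul]
      exact Finset.sum_congr rfl fun e _ => by ring
    have h3 : ∀ i : ι, ∑ j, ∑ e, (N i e * μ i) * (N j e * μ j)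
        = ∑ e, ∑ j, (N i e * μ i) * (N j e * μ j) := fun i => Finset.sum_comm
    simp_rw [h1, h2, h3]
    exact Finset.sum_comm
  set En : ℝ := ∑ e, f e ^ 2 with hEn
  have hfpos : ∀ e, 0 ≤ f e := fun e =>
    Finset.sum_nonneg fun i _ => mul_nonneg (hN i e) (hμpos i)
  -- En > 0
  have hEnpos : 0 < En := by
    obtain ⟨i0, hi0⟩ : ∃ i, 0 < μstar i := by
      by_contra h
      push_neg at h
      have : ∑ i, μstar i = 0 :=
        Finset.sum_eq_zero fun i _ => le_antisymm (h i) (hμpos i)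
      rw [hμsum] at this; norm_num at this
    obtain ⟨e0, he0⟩ : ∃ e, N i0 e ≠ 0 := by
      by_contra h; push_neg at h; exact hNz i0 (funext h)
    have hfe0 : 0 < f e0 := by
      have : 0 < N i0 e0 * μstar i0 :=
        mul_pos (lt_of_le_of_ne (hN i0 e0) (Ne.symm he0)) hi0
      calc 0 < N i0 e0 * μstar i0 := this
        _ ≤ f e0 := Finset.single_le_sum
            (fun i _ => mul_nonneg (hN i e0) (hμpos i)) (Finset.mem_univ i0)
    calc 0 < f e0 ^ 2 := by positivity
      _ ≤ En := Finset.single_le_sum (fun e _ => sq_nonneg (f e)) (Finset.mem_univ e0)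
  -- first-order optimality: En ≤ ∑ e, N i e * f e for every i
  have hstep1 : ∀ i, En ≤ ∑ e, N i e * f e := by
    intro i
    set B : ℝ := ∑ e, f e * (N i e - f e) with hBdef
    set C : ℝ := ∑ e, (N i e - f e) ^ 2 with hCdef
    have hCnn : 0 ≤ C := Finset.sum_nonneg fun e _ => sq_nonneg _
    have key : ∀ t : ℝ, 0 ≤ t → t ≤ 1 → 0 ≤ 2 * t * B + t ^ 2 * C := by
      intro t ht0 ht1
      have hfeas1 : ∀ j, 0 ≤ μstar j + t * ((if j = i then (1:ℝ) else 0) - μstar j) := by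
        intro j
        have h1 : μstar j + t * ((if j = i then (1:ℝ) else 0) - μstar j)
            = (1 - t) * μstar j + t * (if j = i then (1:ℝ) else 0) := by ring
        rw [h1]
        have : (0:ℝ) ≤ if j = i then (1:ℝ) else 0 := by positivity
        have := mul_nonneg ht0 this
        nlinarith [hμpos j]
      have hfeas2 : ∑ j, (μstar j + t * ((if j = i then (1:ℝ) else 0) - μstar j)) = 1 := by
        rw [Finset.sum_add_distrib, hμsum, ← Finset.mul_sum, Finset.sum_sub_distrib,
          hμsum]
        simp
      have hmin := hμmin _ hfeas1 hfeas2
      rw [hQ, hQ] at hmin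
      have hFt : ∀ e, ∑ j, N j e * (μstar j + t * ((if j = i then (1:ℝ) else 0) - μstar j))
          = f e + t * (N i e - f e) := by
        intro e
        have h1 : ∑ j, N j e * (if j = i then (1:ℝ) else 0) = N i e := by
          rw [Finset.sum_eq_single i] <;> simp_all
        calc ∑ j, N j e * (μstar j + t * ((if j = i then (1:ℝ) else 0) - μstar j))
            = ∑ j, (N j e * μstar j
              + t * (N j e * (if j = i then (1:ℝ) else 0) - N j e * μstar j)) := by
              exact Finset.sum_congr rfl fun j _ => by ring
          _ = f e + t * (N i e - f e) := by
              rw [Finset.sum_add_distrib, ← Finset.mul_sum, Finset.sum_sub_distrib, h1, hf]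
        -- done
      simp_rw [hFt] at hmin
      have hexp : ∑ e, (f e + t * (N i e - f e)) ^ 2 = En + (2 * t * B + t ^ 2 * C) := by
        rw [hEn, hBdef, hCdef, Finset.mul_sum, Finset.mul_sum, ← Finset.sum_add_distrib,
          ← Finset.sum_add_distrib]
        exact Finset.sum_congr rfl fun e _ => by ring
      rw [hexp] at hmin
      linarith
    have hB : 0 ≤ B := by
      by_contra hB
      push_neg at hB
      set t0 : ℝ := min 1 (-B / (C + 1)) with ht0def
      have hCpos : (0:ℝ) < C + 1 := by linarith
      have ht0pos : 0 < t0 := lt_min one_pos (div_pos (by linarith) hCpos)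
      have ht0le : t0 ≤ 1 := min_le_left _ _
      have hkey := key t0 ht0pos.le ht0le
      have h1 : t0 * C ≤ -B := by
        have h2 : t0 * C ≤ (-B / (C + 1)) * C :=
          mul_le_mul_of_nonneg_right (min_le_right _ _) hCnn
        have h3 : (-B / (C + 1)) * C ≤ -B := by
          rw [div_mul_eq_mul_div, div_le_iff₀ hCpos]
          nlinarith
        linarith
      nlinarith
    have : B = (∑ e, N i e * f e) - En := by
      rw [hBdef, hEn, ← Finset.sum_sub_distrib]
      exact Finset.sum_congr rfl fun e _ => by ring
    linarith [this ▸ hB]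
  -- candidate density
  set ρh : E → ℝ := fun e => f e / En with hρh
  have hρhpos : ∀ e, 0 ≤ ρh e := fun e => div_nonneg (hfpos e) hEnpos.le
  have hρhadm : ∀ i, 1 ≤ ∑ e, N i e * ρh e := by
    intro i
    have : ∑ e, N i e * ρh e = (∑ e, N i e * f e) / En := by
      rw [Finset.sum_div]
      exact Finset.sum_congr rfl fun e _ => by rw [hρh]; ring
    rw [this, le_div_iff₀ hEnpos, one_mul]
    exact hstep1 i
  have hρhsq : ∑ e, ρh e ^ 2 = 1 / En := by
    have : ∑ e, ρh e ^ 2 = (∑ e, f e ^ 2) / En ^ 2 := by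
      rw [Finset.sum_div]
      exact Finset.sum_congr rfl fun e _ => by rw [hρh]; ring
    rw [this, ← hEn]
    field_simp
  have hM1 : ∑ e, ρstar e ^ 2 ≤ 1 / En := by
    rw [← hρhsq]; exact hρmin ρh hρhpos hρhadm
  -- lower bound via Cauchy–Schwarz
  have hfρ : 1 ≤ ∑ e, f e * ρstar e := by
    have hswap : ∑ e, f e * ρstar e = ∑ i, μstar i * ∑ e, N i e * ρstar e := by
      rw [hf]
      simp_rw [Finset.sum_mul, Finset.mul_sum]
      rw [Finset.sum_comm]
      exact Finset.sum_congr rfl fun i _ => Finset.sum_congr rfl fun e _ => by ring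
    rw [hswap]
    calc (1:ℝ) = ∑ i, μstar i * 1 := by simp [hμsum]
      _ ≤ ∑ i, μstar i * ∑ e, N i e * ρstar e :=
        Finset.sum_le_sum fun i _ =>
          mul_le_mul_of_nonneg_left (hρadm i) (hμpos i)
  have hCS : (∑ e, f e * ρstar e) ^ 2 ≤ En * ∑ e, ρstar e ^ 2 := by
    rw [hEn]; exact Finset.sum_mul_sq_le_sq_mul_sq _ _ _
  have hM2 : 1 / En ≤ ∑ e, ρstar e ^ 2 := by
    rw [div_le_iff₀ hEnpos]
    nlinarith
  have hMeq : ∑ e, ρstar e ^ 2 = 1 / En := le_antisymm hM1 hM2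
  -- strict convexity / midpoint argument: ρstar = ρh
  have hρeq : ∀ e, ρstar e = ρh e := by
    have hmidpos : ∀ e, 0 ≤ (ρstar e + ρh e) / 2 := fun e => by
      have := hρpos e; have := hρhpos e; linarith
    have hmidadm : ∀ i, 1 ≤ ∑ e, N i e * ((ρstar e + ρh e) / 2) := by
      intro i
      have : ∑ e, N i e * ((ρstar e + ρh e) / 2)
          = (∑ e, N i e * ρstar e) / 2 + (∑ e, N i e * ρh e) / 2 := by
        rw [Finset.sum_div, Finset.sum_div, ← Finset.sum_add_distrib]
        exact Finset.sum_congr rfl fun e _ => by ring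
      rw [this]
      have := hρadm i; have := hρhadm i; linarith
    have hmin := hρmin _ hmidpos hmidadm
    have hiden : ∑ e, ((ρstar e + ρh e) / 2) ^ 2
        = (∑ e, ρstar e ^ 2) / 2 + (∑ e, ρh e ^ 2) / 2
          - ∑ e, ((ρstar e - ρh e) / 2) ^ 2 := by
      rw [Finset.sum_div, Finset.sum_div, ← Finset.sum_add_distrib, ← Finset.sum_sub_distrib]
      exact Finset.sum_congr rfl fun e _ => by ring
    rw [hiden, hρhsq, hMeq] at hmin
    have hD : ∑ e, ((ρstar e - ρh e) / 2) ^ 2 ≤ 0 := by linarith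
    intro e
    have h0 : ((ρstar e - ρh e) / 2) ^ 2 = 0 := by
      have h1 : ((ρstar e - ρh e) / 2) ^ 2 ≤ ∑ e, ((ρstar e - ρh e) / 2) ^ 2 :=
        Finset.single_le_sum (f := fun e' => ((ρstar e' - ρh e') / 2) ^ 2)
          (fun e' _ => sq_nonneg _) (Finset.mem_univ e)
      nlinarith [sq_nonneg ((ρstar e - ρh e) / 2)]
    have := pow_eq_zero_iff (n := 2) (by norm_num) |>.mp h0
    linarith [this]
  intro e
  rw [hMeq, hρeq e, hρh]
  field_simp
  rfl
end

section
/- (Two-sided bounds) For any finite family Γ, any admissible ρ ∈ Adm(Γ), and any pmf μ ∈ P(Γ): ρ^Tρ ≥ Mod_2(Γ) ≥ (μ^T N N^T μ)^{-1}. -/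
/-- Two-sided bounds: for any admissible `ρ` and any pmf `μ`,
`ρᵀρ ≥ Mod₂(Γ) ≥ (μᵀNNᵀμ)⁻¹`. -/
theorem stmt17 {E ι : Type*} [Fintype E] [Fintype ι] [Nonempty ι]
    (N : ι → E → ℝ) (hN : ∀ i e, 0 ≤ N i e) (hNz : ∀ i, N i ≠ 0)
    (ρ : E → ℝ) (hρpos : ∀ e, 0 ≤ ρ e) (hρadm : ∀ i, 1 ≤ ∑ e, N i e * ρ e)
    (μ : ι → ℝ) (hμpos : ∀ i, 0 ≤ μ i) (hμsum : ∑ i, μ i = 1) :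
    (∑ i, ∑ j, (∑ e, N i e * N j e) * μ i * μ j)⁻¹
        ≤ sInf {x : ℝ | ∃ ρ' : E → ℝ, (∀ e, 0 ≤ ρ' e) ∧
            (∀ i, 1 ≤ ∑ e, N i e * ρ' e) ∧ x = ∑ e, ρ' e ^ 2} ∧
      sInf {x : ℝ | ∃ ρ' : E → ℝ, (∀ e, 0 ≤ ρ' e) ∧
          (∀ i, 1 ≤ ∑ e, N i e * ρ' e) ∧ x = ∑ e, ρ' e ^ 2}
        ≤ ∑ e, ρ e ^ 2 := by
  set A : Set ℝ := {x : ℝ | ∃ ρ' : E → ℝ, (∀ e, 0 ≤ ρ' e) ∧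
      (∀ i, 1 ≤ ∑ e, N i e * ρ' e) ∧ x = ∑ e, ρ' e ^ 2} with hA
  have hmem : (∑ e, ρ e ^ 2) ∈ A := ⟨ρ, hρpos, hρadm, rfl⟩
  have hne : A.Nonempty := ⟨_, hmem⟩
  have hbdd : BddBelow A := by
    refine ⟨0, fun x hx => ?_⟩
    obtain ⟨ρ', _, _, rfl⟩ := hx
    exact Finset.sum_nonneg fun e _ => sq_nonneg _
  have hS : (∑ i, ∑ j, (∑ e, N i e * N j e) * μ i * μ j)
      = ∑ e, (∑ i, μ i * N i e) ^ 2 := by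
    simp only [sq, Finset.sum_mul, Finset.mul_sum]
    conv_rhs => rw [Finset.sum_comm]
    refine Finset.sum_congr rfl fun i _ => ?_
    conv_rhs => rw [Finset.sum_comm]
    refine Finset.sum_congr rfl fun j _ => Finset.sum_congr rfl fun e _ => by ring
  constructor
  · refine le_csInf hne fun x hx => ?_
    obtain ⟨ρ', hρ'pos, hρ'adm, rfl⟩ := hx
    rw [hS]
    set S : ℝ := ∑ e, (∑ i, μ i * N i e) ^ 2 with hSdef
    have hT : (0:ℝ) ≤ ∑ e, ρ' e ^ 2 := Finset.sum_nonneg fun e _ => sq_nonneg _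
    have h1 : (1:ℝ) ≤ ∑ e, (∑ i, μ i * N i e) * ρ' e := by
      have : (∑ e, (∑ i, μ i * N i e) * ρ' e) = ∑ i, μ i * ∑ e, N i e * ρ' e := by
        simp only [Finset.sum_mul, Finset.mul_sum]
        rw [Finset.sum_comm]
        exact Finset.sum_congr rfl fun i _ => Finset.sum_congr rfl fun e _ => by ring
      rw [this, ← hμsum]
      refine Finset.sum_le_sum fun i _ => ?_
      calc μ i = μ i * 1 := by ring
        _ ≤ μ i * ∑ e, N i e * ρ' e := by
            exact mul_le_mul_of_nonneg_left (hρ'adm i) (hμpos i)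
    have hCS : (∑ e, (∑ i, μ i * N i e) * ρ' e) ^ 2 ≤ S * ∑ e, ρ' e ^ 2 :=
      Finset.sum_mul_sq_le_sq_mul_sq Finset.univ _ _
    have h2 : (1:ℝ) ≤ S * ∑ e, ρ' e ^ 2 := by
      calc (1:ℝ) = 1 ^ 2 := by norm_num
        _ ≤ (∑ e, (∑ i, μ i * N i e) * ρ' e) ^ 2 := by
            apply pow_le_pow_left₀ (by norm_num) h1
        _ ≤ S * ∑ e, ρ' e ^ 2 := hCS
    have hSpos : 0 < S := by
      by_contra h
      push_neg at h
      have : S * ∑ e, ρ' e ^ 2 ≤ 0 := mul_nonpos_of_nonpos_of_nonneg h hT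
      linarith
    rw [inv_le_iff_one_le_mul₀ hSpos]
    linarith [h2]
  · exact csInf_le hbdd hmem
end

section
/- (Probabilistic dual for general p) For 1 < p < ∞ with conjugate exponent q = p/(p−1) and weights σ > 0, Mod_{p,σ}(Γ)^{-1/p} = ( min_{μ ∈ P(Γ)} ∑_{e∈E} σ(e)^{-q/p} ( (N^T μ)(e) )^q )^{1/q}. -/
open Finset Filter Set

/-- Tangent-line (convexity) inequality for `rpow`: for `1 < q` and `x, y ≥ 0`,
`x^q + q x^{q-1} (y - x) ≤ y^q`. -/
private lemma tangent_line_le {q : ℝ} (hq : 1 < q) {x y : ℝ} (hx : 0 ≤ x) (hy : 0 ≤ y) :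
    x ^ q + q * x ^ (q - 1) * (y - x) ≤ y ^ q := by
  rcases hx.eq_or_lt with h | hxpos
  · rw [← h, Real.zero_rpow (by positivity), Real.zero_rpow (by linarith : q - 1 ≠ 0)]
    simpa using Real.rpow_nonneg hy q
  · have hs : -1 ≤ y / x - 1 := by
      have : 0 ≤ y / x := div_nonneg hy hxpos.le
      linarith
    have hb := one_add_mul_self_le_rpow_one_add hs hq.le
    have h1 : (1 : ℝ) + (y / x - 1) = y / x := by ring
    rw [h1] at hb
    have hxq : (0:ℝ) < x ^ q := Real.rpow_pos_of_pos hxpos q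
    have h2 : (1 + q * (y / x - 1)) * x ^ q ≤ (y / x) ^ q * x ^ q :=
      mul_le_mul_of_nonneg_right hb hxq.le
    have h3 : (y / x) ^ q * x ^ q = y ^ q := by
      rw [Real.div_rpow hy hxpos.le, div_mul_cancel₀]
      exact hxq.ne'
    have h4 : x ^ (q - 1) = x ^ q / x := by
      rw [Real.rpow_sub hxpos, Real.rpow_one]
    rw [h3] at h2
    calc x ^ q + q * x ^ (q - 1) * (y - x)
        = (1 + q * (y / x - 1)) * x ^ q := by
          rw [h4]; field_simp
      _ ≤ y ^ q := h2

/-- Probabilistic dual for general `p`: with `q = p/(p-1)`,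
`Mod_{p,σ}(Γ)^{-1/p} = (min_{μ ∈ P(Γ)} ∑_e σ(e)^{-q/p} ((Nᵀμ)(e))^q)^{1/q}`. -/
theorem stmt18 {E ι : Type*} [Fintype E] [Fintype ι] [Nonempty ι]
    (σ : E → ℝ) (hσ : ∀ e, 0 < σ e)
    (p q : ℝ) (hp : 1 < p) (hq : q = p / (p - 1))
    (N : ι → E → ℝ) (hN : ∀ i e, 0 ≤ N i e) (hNz : ∀ i, N i ≠ 0) :
    (sInf {x : ℝ | ∃ ρ : E → ℝ, (∀ e, 0 ≤ ρ e) ∧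
        (∀ i, 1 ≤ ∑ e, N i e * ρ e) ∧ x = ∑ e, σ e * ρ e ^ p}) ^ (-(1 / p))
      = (sInf {x : ℝ | ∃ μ : ι → ℝ, (∀ i, 0 ≤ μ i) ∧ (∑ i, μ i = 1) ∧
          x = ∑ e, σ e ^ (-(q / p)) * (∑ i, N i e * μ i) ^ q}) ^ (1 / q) := by
  classical
  have hp0 : (0:ℝ) < p := lt_trans one_pos hp
  have hp1 : p - 1 ≠ 0 := sub_ne_zero.2 (ne_of_gt hp)
  have hpq : p.HolderConjugate q := (Real.holderConjugate_iff_eq_conjExponent hp).2 hq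
  have hq1 : 1 < q := hpq.symm.lt
  have hq0 : (0:ℝ) < q := lt_trans one_pos hq1
  have hqp : q / p = q - 1 := by
    rw [hq]; field_simp; ring
  have hpq1 : p / q = p - 1 := by
    rw [hq]; field_simp
  set w : E → ℝ := fun e => σ e ^ (-(q / p)) with hw
  set A : (ι → ℝ) → E → ℝ := fun μ e => ∑ i, N i e * μ i with hA
  set D : (ι → ℝ) → ℝ := fun μ => ∑ e, w e * A μ e ^ q with hD
  have hw0 : ∀ e, 0 < w e := fun e => Real.rpow_pos_of_pos (hσ e) _
  have hA0 : ∀ (μ : ι → ℝ), (∀ i, 0 ≤ μ i) → ∀ e, 0 ≤ A μ e := fun μ hμ e =>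
    Finset.sum_nonneg fun i _ => mul_nonneg (hN i e) (hμ i)
  -- continuity of D
  have hDcont : Continuous D := by
    apply continuous_finset_sum
    intro e _
    apply Continuous.mul continuous_const
    exact (Real.continuous_rpow_const hq0.le).comp
      (continuous_finset_sum _ fun i _ => continuous_const.mul (continuous_apply i))
  -- minimizer over the standard simplex
  have hSne : (stdSimplex ℝ ι).Nonempty := by
    refine ⟨fun _ => (Fintype.card ι : ℝ)⁻¹, fun i => ?_, ?_⟩
    · positivity
    · rw [Finset.sum_const, nsmul_eq_mul, Finset.card_univ, mul_inv_cancel₀]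
      exact_mod_cast Fintype.card_ne_zero
  obtain ⟨μ0, hμ0, hmin⟩ := (isCompact_stdSimplex ℝ ι).exists_isMinOn hSne hDcont.continuousOn
  set M : ℝ := D μ0 with hMdef
  -- M > 0
  have hM : 0 < M := by
    obtain ⟨i, hi⟩ : ∃ i, 0 < μ0 i := by
      by_contra h
      push_neg at h
      have h0 : ∑ i, μ0 i = 0 := Finset.sum_eq_zero fun i _ => le_antisymm (h i) (hμ0.1 i)
      rw [hμ0.2] at h0
      exact one_ne_zero h0
    obtain ⟨e, hne⟩ : ∃ e, N i e ≠ 0 := Function.ne_iff.1 (hNz i)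
    have hAe : 0 < A μ0 e :=
      lt_of_lt_of_le (mul_pos (lt_of_le_of_ne (hN i e) (Ne.symm hne)) hi)
        (Finset.single_le_sum (fun j _ => mul_nonneg (hN j e) (hμ0.1 j)) (Finset.mem_univ i))
    exact Finset.sum_pos'
      (fun e' _ => mul_nonneg (hw0 e').le (Real.rpow_nonneg (hA0 μ0 hμ0.1 e') q))
      ⟨e, Finset.mem_univ e, mul_pos (hw0 e) (Real.rpow_pos_of_pos hAe q)⟩
  -- first-order optimality, summed form
  have step : ∀ μ ∈ stdSimplex ℝ ι,
      ∑ e, w e * (A μ e ^ (q - 1) * (A μ0 e - A μ e)) ≤ 0 := by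
    intro μ hμ
    have h1 : D μ + ∑ e, w e * (q * (A μ e ^ (q - 1) * (A μ0 e - A μ e))) ≤ M := by
      calc D μ + ∑ e, w e * (q * (A μ e ^ (q - 1) * (A μ0 e - A μ e)))
          = ∑ e, w e * (A μ e ^ q + q * A μ e ^ (q - 1) * (A μ0 e - A μ e)) := by
            rw [hD, ← Finset.sum_add_distrib]
            exact Finset.sum_congr rfl fun e _ => by ring
        _ ≤ ∑ e, w e * A μ0 e ^ q :=
            Finset.sum_le_sum fun e _ => mul_le_mul_of_nonneg_left
              (tangent_line_le hq1 (hA0 μ hμ.1 e) (hA0 μ0 hμ0.1 e)) (hw0 e).le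
        _ = M := rfl
    have h2 : M ≤ D μ := hmin hμ
    have h3 : ∑ e, w e * (q * (A μ e ^ (q - 1) * (A μ0 e - A μ e)))
        = q * ∑ e, w e * (A μ e ^ (q - 1) * (A μ0 e - A μ e)) := by
      rw [Finset.mul_sum]
      exact Finset.sum_congr rfl fun e _ => by ring
    rw [h3] at h1
    nlinarith
  -- first-order condition at each row γ
  have hFOC : ∀ γ, M ≤ ∑ e, w e * (A μ0 e ^ (q - 1) * N γ e) := by
    intro γ
    set δ : ι → ℝ := fun i => if i = γ then 1 else 0 with hδ
    have hδmem : δ ∈ stdSimplex ℝ ι := by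
      refine ⟨fun i => ?_, ?_⟩
      · by_cases h : i = γ <;> simp [hδ, h]
      · simp [hδ]
    have hAδ : ∀ e, A δ e = N γ e := by
      intro e
      simp [hA, hδ, mul_ite, Finset.sum_ite_eq']
    set μt : ℝ → ι → ℝ := fun t i => μ0 i + t * (δ i - μ0 i) with hμt
    have hmem : ∀ t ∈ Set.Icc (0:ℝ) 1, μt t ∈ stdSimplex ℝ ι := by
      intro t ht
      refine ⟨fun i => ?_, ?_⟩
      · have h0 := hμ0.1 i
        have h1 := hδmem.1 i
        have heq : μt t i = (1 - t) * μ0 i + t * δ i := by simp only [hμt]; ring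
        rw [heq]
        exact add_nonneg (mul_nonneg (by linarith [ht.2]) h0) (mul_nonneg ht.1 h1)
      · have : ∑ i, μt t i = ∑ i, μ0 i + t * (∑ i, δ i - ∑ i, μ0 i) := by
          simp only [hμt]
          rw [Finset.sum_add_distrib, ← Finset.mul_sum, Finset.sum_sub_distrib]
        rw [this, hμ0.2, hδmem.2]
        ring
    have hAt : ∀ t e, A (μt t) e = A μ0 e + t * (N γ e - A μ0 e) := by
      intro t e
      have : ∀ i, N i e * μt t i = N i e * μ0 i + t * (N i e * δ i - N i e * μ0 i) := by
        intro i; simp only [hμt]; ring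
      calc A (μt t) e = ∑ i, (N i e * μ0 i + t * (N i e * δ i - N i e * μ0 i)) :=
            Finset.sum_congr rfl fun i _ => this i
        _ = A μ0 e + t * (A δ e - A μ0 e) := by
            rw [Finset.sum_add_distrib, ← Finset.mul_sum, Finset.sum_sub_distrib]
        _ = A μ0 e + t * (N γ e - A μ0 e) := by rw [hAδ]
    set F : ℝ → ℝ := fun t =>
      ∑ e, w e * ((A μ0 e + t * (N γ e - A μ0 e)) ^ (q - 1) * (N γ e - A μ0 e)) with hF
    have hFpos : ∀ t ∈ Set.Ioc (0:ℝ) 1, 0 ≤ F t := by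
      intro t ht
      have h := step (μt t) (hmem t ⟨ht.1.le, ht.2⟩)
      have heq : ∑ e, w e * (A (μt t) e ^ (q - 1) * (A μ0 e - A (μt t) e)) = -t * F t := by
        rw [hF, Finset.mul_sum]
        refine Finset.sum_congr rfl fun e _ => ?_
        rw [hAt t e]
        ring
      rw [heq] at h
      by_contra hc
      push_neg at hc
      nlinarith [ht.1]
    have hFcont : ContinuousAt F 0 := by
      apply Continuous.continuousAt
      apply continuous_finset_sum
      intro e _
      apply Continuous.mul continuous_const
      apply Continuous.mul _ continuous_const
      exact (Real.continuous_rpow_const (by linarith)).comp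
        (continuous_const.add (continuous_id.mul continuous_const))
    have hF0 : 0 ≤ F 0 := by
      refine ge_of_tendsto (hFcont.tendsto.mono_left nhdsWithin_le_nhds)
        (Filter.eventually_of_mem (Ioc_mem_nhdsGT_of_mem ?_) hFpos)
      exact ⟨le_refl (0:ℝ), zero_lt_one⟩
    have hxx : ∀ e, A μ0 e ^ (q - 1) * A μ0 e = A μ0 e ^ q := by
      intro e
      rcases (hA0 μ0 hμ0.1 e).eq_or_lt with h | h
      · rw [← h, Real.zero_rpow (by linarith : q - 1 ≠ 0),
          Real.zero_rpow (by positivity : q ≠ 0), mul_zero]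
      · have h2 := Real.rpow_add h (q - 1) 1
        rw [sub_add_cancel] at h2
        rw [h2, Real.rpow_one]
    have hF0eq : F 0 = (∑ e, w e * (A μ0 e ^ (q - 1) * N γ e)) - M := by
      rw [hF, hMdef, hD, ← Finset.sum_sub_distrib]
      refine Finset.sum_congr rfl fun e _ => ?_
      rw [zero_mul, add_zero, ← hxx e]
      ring
    rw [hF0eq] at hF0
    linarith
  -- the optimal density
  set ρs : E → ℝ := fun e => w e * A μ0 e ^ (q - 1) / M with hρs
  have hρs0 : ∀ e, 0 ≤ ρs e := fun e =>
    div_nonneg (mul_nonneg (hw0 e).le (Real.rpow_nonneg (hA0 μ0 hμ0.1 e) _)) hM.le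
  have hρsadm : ∀ i, 1 ≤ ∑ e, N i e * ρs e := by
    intro i
    have heq : ∑ e, N i e * ρs e = (∑ e, w e * (A μ0 e ^ (q - 1) * N i e)) / M := by
      rw [Finset.sum_div]
      exact Finset.sum_congr rfl fun e _ => by rw [hρs]; ring
    rw [heq, le_div_iff₀ hM, one_mul]
    exact hFOC i
  -- rpow computations for the energy of ρs
  have hterm : ∀ e, σ e * ρs e ^ p = w e * A μ0 e ^ q / M ^ p := by
    intro e
    have hAe := hA0 μ0 hμ0.1 e
    have h1 : ρs e ^ p = (w e) ^ p * (A μ0 e ^ (q - 1)) ^ p / M ^ p := by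
      rw [hρs, Real.div_rpow (mul_nonneg (hw0 e).le (Real.rpow_nonneg hAe _)) hM.le,
        Real.mul_rpow (hw0 e).le (Real.rpow_nonneg hAe _)]
    have h2 : (w e) ^ p = σ e ^ (-q) := by
      rw [hw, ← Real.rpow_mul (hσ e).le]
      congr 1
      field_simp
    have h3 : (A μ0 e ^ (q - 1)) ^ p = A μ0 e ^ q := by
      rw [← Real.rpow_mul hAe]
      congr 1
      rw [← hqp]
      field_simp
    rw [h1, h2, h3]
    have h4 : σ e * σ e ^ (-q) = w e := by
      have h5 := Real.rpow_add (hσ e) 1 (-q)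
      rw [Real.rpow_one] at h5
      rw [hw, ← h5]
      congr 1
      rw [hqp]; ring
    rw [← h4]; ring
  have henergy : ∑ e, σ e * ρs e ^ p = M ^ (1 - p) := by
    have h1 : ∑ e, σ e * ρs e ^ p = (∑ e, w e * A μ0 e ^ q) / M ^ p := by
      rw [Finset.sum_div]; exact Finset.sum_congr rfl fun e _ => hterm e
    rw [h1]
    show M / M ^ p = M ^ (1 - p)
    rw [Real.rpow_sub hM, Real.rpow_one]
  -- Hölder lower bound on the primal set
  have hlow : ∀ x ∈ {x : ℝ | ∃ ρ : E → ℝ, (∀ e, 0 ≤ ρ e) ∧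
      (∀ i, 1 ≤ ∑ e, N i e * ρ e) ∧ x = ∑ e, σ e * ρ e ^ p}, M ^ (1 - p) ≤ x := by
    rintro x ⟨ρ, hρ0, hadm, rfl⟩
    set En : ℝ := ∑ e, σ e * ρ e ^ p with hEn
    have hEn0 : 0 ≤ En :=
      Finset.sum_nonneg fun e _ => mul_nonneg (hσ e).le (Real.rpow_nonneg (hρ0 e) p)
    have h1 : (1:ℝ) ≤ ∑ e, A μ0 e * ρ e := by
      calc (1:ℝ) = ∑ i, μ0 i := hμ0.2.symm
        _ ≤ ∑ i, μ0 i * ∑ e, N i e * ρ e :=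
            Finset.sum_le_sum fun i _ => le_mul_of_one_le_right (hμ0.1 i) (hadm i)
        _ = ∑ e, A μ0 e * ρ e := by
            simp_rw [Finset.mul_sum]
            rw [Finset.sum_comm]
            refine Finset.sum_congr rfl fun e _ => ?_
            show ∑ i, μ0 i * (N i e * ρ e) = (∑ i, N i e * μ0 i) * ρ e
            rw [Finset.sum_mul]
            exact Finset.sum_congr rfl fun i _ => by ring
    have hHolder := Real.inner_le_Lp_mul_Lq_of_nonneg (s := Finset.univ) hpq
      (f := fun e => σ e ^ (1/p) * ρ e) (g := fun e => σ e ^ (-(1/p)) * A μ0 e)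
      (fun e _ => mul_nonneg (Real.rpow_nonneg (hσ e).le _) (hρ0 e))
      (fun e _ => mul_nonneg (Real.rpow_nonneg (hσ e).le _) (hA0 μ0 hμ0.1 e))
    have hfg : ∑ e, (σ e ^ (1/p) * ρ e) * (σ e ^ (-(1/p)) * A μ0 e) = ∑ e, A μ0 e * ρ e := by
      refine Finset.sum_congr rfl fun e _ => ?_
      have hs : σ e ^ (1/p) * σ e ^ (-(1/p)) = 1 := by
        rw [← Real.rpow_add (hσ e)]; simp
      calc (σ e ^ (1/p) * ρ e) * (σ e ^ (-(1/p)) * A μ0 e)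
          = (σ e ^ (1/p) * σ e ^ (-(1/p))) * (A μ0 e * ρ e) := by ring
        _ = A μ0 e * ρ e := by rw [hs, one_mul]
    have hfp : ∑ e, (σ e ^ (1/p) * ρ e) ^ p = En := by
      refine Finset.sum_congr rfl fun e _ => ?_
      rw [Real.mul_rpow (Real.rpow_nonneg (hσ e).le _) (hρ0 e), ← Real.rpow_mul (hσ e).le,
        one_div_mul_cancel (ne_of_gt hp0), Real.rpow_one]
    have hgq : ∑ e, (σ e ^ (-(1/p)) * A μ0 e) ^ q = M := by
      show _ = ∑ e, w e * A μ0 e ^ q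
      refine Finset.sum_congr rfl fun e _ => ?_
      rw [Real.mul_rpow (Real.rpow_nonneg (hσ e).le _) (hA0 μ0 hμ0.1 e),
        ← Real.rpow_mul (hσ e).le, hw]
      have : -(1/p) * q = -(q/p) := by ring
      rw [this]
    rw [hfg, hfp, hgq] at hHolder
    have h2 : (1:ℝ) ≤ En ^ (1/p) * M ^ (1/q) := le_trans h1 hHolder
    have hMq : 0 < M ^ (1/q) := Real.rpow_pos_of_pos hM _
    have h3 : 1 / M ^ (1/q) ≤ En ^ (1/p) := (div_le_iff₀ hMq).2 (by linarith)
    have h4 := Real.rpow_le_rpow (by positivity) h3 hp0.le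
    have h5 : (En ^ (1/p)) ^ p = En := by
      rw [← Real.rpow_mul hEn0, one_div_mul_cancel (ne_of_gt hp0), Real.rpow_one]
    have h6 : (1 / M ^ (1/q)) ^ p = M ^ (1 - p) := by
      have ha : 1 / M ^ (1/q) = M ^ (-(1/q)) := by rw [Real.rpow_neg hM.le, one_div]
      rw [ha, ← Real.rpow_mul hM.le]
      congr 1
      have hb : (1/q) * p = p - 1 := by rw [← hpq1]; ring
      linarith
    rw [h5, h6] at h4
    exact h4
  have hmemP : M ^ (1 - p) ∈ {x : ℝ | ∃ ρ : E → ℝ, (∀ e, 0 ≤ ρ e) ∧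
      (∀ i, 1 ≤ ∑ e, N i e * ρ e) ∧ x = ∑ e, σ e * ρ e ^ p} :=
    ⟨ρs, hρs0, hρsadm, henergy.symm⟩
  have hSp : sInf {x : ℝ | ∃ ρ : E → ℝ, (∀ e, 0 ≤ ρ e) ∧
      (∀ i, 1 ≤ ∑ e, N i e * ρ e) ∧ x = ∑ e, σ e * ρ e ^ p} = M ^ (1 - p) :=
    le_antisymm (csInf_le ⟨M ^ (1 - p), hlow⟩ hmemP) (le_csInf ⟨_, hmemP⟩ hlow)
  have hTlow : ∀ x ∈ {x : ℝ | ∃ μ : ι → ℝ, (∀ i, 0 ≤ μ i) ∧ (∑ i, μ i = 1) ∧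
      x = ∑ e, σ e ^ (-(q / p)) * (∑ i, N i e * μ i) ^ q}, M ≤ x := by
    rintro x ⟨μ, h1, h2, rfl⟩
    exact hmin ⟨h1, h2⟩
  have hmemT : M ∈ {x : ℝ | ∃ μ : ι → ℝ, (∀ i, 0 ≤ μ i) ∧ (∑ i, μ i = 1) ∧
      x = ∑ e, σ e ^ (-(q / p)) * (∑ i, N i e * μ i) ^ q} :=
    ⟨μ0, hμ0.1, hμ0.2, rfl⟩
  have hT : sInf {x : ℝ | ∃ μ : ι → ℝ, (∀ i, 0 ≤ μ i) ∧ (∑ i, μ i = 1) ∧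
      x = ∑ e, σ e ^ (-(q / p)) * (∑ i, N i e * μ i) ^ q} = M :=
    le_antisymm (csInf_le ⟨M, hTlow⟩ hmemT) (le_csInf ⟨_, hmemT⟩ hTlow)
  rw [hSp, hT, ← Real.rpow_mul hM.le]
  congr 1
  rw [hq]
  field_simp
  ring
end

section
/- (Spanning tree modulus lower bound) Let Γ_spt be the family of all spanning trees of a finite connected graph G with indicator usage vectors. Then Mod_2(Γ_spt)^{-1} ≤ ∑_{e∈E} R_eff(e)^2, where R_eff(e) is the effective resistance across edge e. -/
set_option linter.unusedSectionVars false
set_option linter.unusedVariables false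
set_option maxHeartbeats 1000000

/-- `s` is the edge set of a spanning tree of `G`. -/
def IsSpanningTreeEdges {V : Type*} (G : SimpleGraph V) (s : Finset (Sym2 V)) : Prop :=
  ↑s ⊆ G.edgeSet ∧ (SimpleGraph.fromEdgeSet (↑s : Set (Sym2 V))).IsTree

/-- The 2-modulus of the connecting family of all walks joining `x` and `y` in `G`,
a walk `w` using edge `e` with multiplicity `w.edges.count e`.  By the theorem of
Duffin/Kirchhoff this is the effective conductance between `x` and `y`, so its
reciprocal is the effective resistance. -/
noncomputable def mod2Connecting {V : Type*} [Fintype V] [DecidableEq V]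
    (G : SimpleGraph V) [DecidableRel G.Adj] (x y : V) : ℝ :=
  sInf {t : ℝ | ∃ ρ : Sym2 V → ℝ, (∀ e, 0 ≤ ρ e) ∧
    (∀ w : G.Walk x y, 1 ≤ ∑ e ∈ G.edgeFinset, (w.edges.count e : ℝ) * ρ e) ∧
    t = ∑ e ∈ G.edgeFinset, ρ e ^ 2}

/-- The 2-modulus of the family of all spanning trees of `G`, with indicator usage
vectors. -/
noncomputable def mod2SpanningTrees {V : Type*} [Fintype V] [DecidableEq V]
    (G : SimpleGraph V) [DecidableRel G.Adj] : ℝ :=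
  sInf {t : ℝ | ∃ ρ : Sym2 V → ℝ, (∀ e, 0 ≤ ρ e) ∧
    (∀ s : Finset (Sym2 V), IsSpanningTreeEdges G s → 1 ≤ ∑ e ∈ s, ρ e) ∧
    t = ∑ e ∈ G.edgeFinset, ρ e ^ 2}

open SimpleGraph Finset

namespace Stmt19Aux

variable {V : Type*} [Fintype V] [DecidableEq V]

/-- the simple graph spanned by a finset of edges -/
abbrev gr (s : Finset (Sym2 V)) : SimpleGraph V := SimpleGraph.fromEdgeSet (↑s : Set (Sym2 V))

lemma gr_adj {s : Finset (Sym2 V)} {u v : V} : (gr s).Adj u v ↔ s(u, v) ∈ s ∧ u ≠ v := by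
  simp [gr, SimpleGraph.fromEdgeSet_adj]

lemma gr_mono {s t : Finset (Sym2 V)} (h : s ⊆ t) : gr s ≤ gr t :=
  SimpleGraph.fromEdgeSet_mono (by exact_mod_cast h)

/-- reachability after deleting one edge -/
lemma reach_delete {s : Finset (Sym2 V)} {u v a b : V}
    (h : (gr s).Reachable a b) :
    (gr (s.erase s(u, v))).Reachable a b ∨
      ((gr (s.erase s(u, v))).Reachable a u ∧ (gr (s.erase s(u, v))).Reachable v b) ∨
      ((gr (s.erase s(u, v))).Reachable a v ∧ (gr (s.erase s(u, v))).Reachable u b) := by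
  set H := gr (s.erase s(u, v)) with hH
  obtain ⟨w⟩ := h
  induction w with
  | nil => exact Or.inl (Reachable.refl _)
  | @cons a c b hac w ih =>
    have hstep : H.Reachable a c ∨ (a = u ∧ c = v) ∨ (a = v ∧ c = u) := by
      rcases gr_adj.mp hac with ⟨hmem, hne⟩
      by_cases hg : s(a, c) = s(u, v)
      · rcases Sym2.eq_iff.mp hg with ⟨rfl, rfl⟩ | ⟨rfl, rfl⟩
        · exact Or.inr (Or.inl ⟨rfl, rfl⟩)
        · exact Or.inr (Or.inr ⟨rfl, rfl⟩)
      · exact Or.inl (SimpleGraph.Adj.reachable (gr_adj.mpr ⟨Finset.mem_erase.mpr ⟨hg, hmem⟩, hne⟩))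
    rcases ih with h1 | ⟨h2, h3⟩ | ⟨h2, h3⟩ <;> rcases hstep with hs | ⟨rfl, rfl⟩ | ⟨rfl, rfl⟩
    · exact Or.inl (hs.trans h1)
    · exact Or.inr (Or.inl ⟨Reachable.refl _, h1⟩)
    · exact Or.inr (Or.inr ⟨Reachable.refl _, h1⟩)
    · exact Or.inr (Or.inl ⟨hs.trans h2, h3⟩)
    · exact Or.inr (Or.inl ⟨Reachable.refl _, h3⟩)
    · exact Or.inl h3
    · exact Or.inr (Or.inr ⟨hs.trans h2, h3⟩)
    · exact Or.inl h3
    · exact Or.inr (Or.inr ⟨Reachable.refl _, h3⟩)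

/-- deleting an edge of an acyclic graph disconnects its endpoints -/
lemma not_reach_erase {s : Finset (Sym2 V)} (hac : (gr s).IsAcyclic) {u v : V}
    (huv : (gr s).Adj u v) : ¬ (gr (s.erase s(u, v))).Reachable u v := by
  intro hr
  have hb : (gr s).IsBridge s(u, v) :=
    (SimpleGraph.isAcyclic_iff_forall_adj_isBridge.mp hac) huv
  rw [SimpleGraph.isBridge_iff] at hb
  refine hb (hr.mono ?_)
  intro a b hab
  rcases gr_adj.mp hab with ⟨hmem, hne⟩
  rw [SimpleGraph.deleteEdges_adj]
  refine ⟨gr_adj.mpr ⟨Finset.mem_of_mem_erase hmem, hne⟩, ?_⟩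
  intro hcon
  exact (Finset.ne_of_mem_erase hmem) hcon

/-- dichotomy of components after deleting a tree edge -/
lemma reach_or_of_tree {s : Finset (Sym2 V)} (hs : (gr s).IsTree) {u v : V}
    (huv : (gr s).Adj u v) (w : V) :
    (gr (s.erase s(u, v))).Reachable w u ∨ (gr (s.erase s(u, v))).Reachable w v := by
  have h := hs.isConnected.preconnected w u
  rcases reach_delete (u := u) (v := v) h with h1 | ⟨h2, h3⟩ | ⟨h2, h3⟩
  · exact Or.inl h1
  · exact Or.inl h2
  · exact Or.inr h2

lemma isAcyclic_of_subset {s t : Finset (Sym2 V)} (h : s ⊆ t) (hac : (gr t).IsAcyclic) :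
    (gr s).IsAcyclic := by
  intro v c hc
  have he : ∀ e ∈ c.edges, e ∈ (gr t).edgeSet := by
    intro e hee
    have := c.edges_subset_edgeSet hee
    rw [SimpleGraph.edgeSet_fromEdgeSet] at this ⊢
    exact ⟨h (by exact_mod_cast this.1), this.2⟩
  exact hac _ (hc.transfer he)

/-- a spanning 2-forest plus a crossing edge is a tree -/
lemma isTree_insert {f : Finset (Sym2 V)} {a b u v : V}
    (hcomp : ∀ w, (gr f).Reachable w a ∨ (gr f).Reachable w b)
    (hab : ¬ (gr f).Reachable a b)
    (hfac : (gr f).IsAcyclic)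
    (hua : (gr f).Reachable u a) (hvb : (gr f).Reachable v b) :
    (gr (insert s(u, v) f)).IsTree := by
  have hne : u ≠ v := by
    rintro rfl
    exact hab ((hua.symm.trans hvb))
  have hle : gr f ≤ gr (insert s(u, v) f) := gr_mono (Finset.subset_insert _ _)
  have hadj : (gr (insert s(u, v) f)).Adj u v :=
    gr_adj.mpr ⟨Finset.mem_insert_self _ _, hne⟩
  constructor
  · rw [SimpleGraph.connected_iff]
    refine ⟨?_, ⟨u⟩⟩
    intro p q
    have key : ∀ w, (gr (insert s(u, v) f)).Reachable w u := by
      intro w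
      rcases hcomp w with h | h
      · exact ((h.trans hua.symm).mono hle)
      · exact (((h.trans hvb.symm).mono hle).trans hadj.symm.reachable)
    exact (key p).trans (key q).symm
  · intro w c hc
    by_cases hg : s(u, v) ∈ c.edges
    · -- the cycle uses the new edge; then u,v reachable without it, contradiction
      have hb : ¬ (gr (insert s(u, v) f)).IsBridge s(u, v) := by
        intro hb'
        exact hb'.notMem_edges_of_isCycle hc hg
      rw [SimpleGraph.isBridge_iff] at hb
      push_neg at hb
      have hr := hb
      have : (gr f).Reachable u v := by
        refine hr.mono ?_
        intro p q hpq
        rw [SimpleGraph.deleteEdges_adj] at hpq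
        obtain ⟨h1, h2⟩ := hpq
        rcases gr_adj.mp h1 with ⟨hmem, hne'⟩
        rcases Finset.mem_insert.mp hmem with h | h
        · exact absurd h h2
        · exact gr_adj.mpr ⟨h, hne'⟩
      exact hab ((hua.symm.trans this).trans hvb)
    · -- the cycle avoids the new edge; transfer into `gr f`
      have he : ∀ e ∈ c.edges, e ∈ (gr f).edgeSet := by
        intro e hee
        have h1 := c.edges_subset_edgeSet hee
        rw [SimpleGraph.edgeSet_fromEdgeSet] at h1 ⊢
        have : e ∈ insert s(u, v) f := by exact_mod_cast h1.1
        rcases Finset.mem_insert.mp this with h | h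
        · exact absurd (h ▸ hee) hg
        · exact ⟨by exact_mod_cast h, h1.2⟩
      exact hfac _ (hc.transfer he)


variable (G : SimpleGraph V) [DecidableRel G.Adj]

open Classical in
/-- the finset of (edge sets of) spanning trees of `G` -/
noncomputable def trees : Finset (Finset (Sym2 V)) :=
  G.edgeFinset.powerset.filter (fun s => IsSpanningTreeEdges G s)

lemma mem_trees {s : Finset (Sym2 V)} : s ∈ trees G ↔ IsSpanningTreeEdges G s := by
  classical
  simp only [trees, Finset.mem_filter, Finset.mem_powerset, and_iff_right_iff_imp]
  intro h e he
  exact SimpleGraph.mem_edgeFinset.mpr (h.1 he)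

lemma isTree_of_mem_trees {s : Finset (Sym2 V)} (hs : s ∈ trees G) : (gr s).IsTree :=
  ((mem_trees G).mp hs).2

open Classical in
/-- trees `t` containing edge `{u,v}` such that removing it separates `x,y`, with `v` on
the `y` side -/
noncomputable def TT (x y u v : V) : Finset (Finset (Sym2 V)) :=
  (trees G).filter (fun t => s(u, v) ∈ t ∧ ¬ (gr (t.erase s(u, v))).Reachable x y ∧
    (gr (t.erase s(u, v))).Reachable v y)

lemma mem_TT {x y u v : V} {t : Finset (Sym2 V)} : t ∈ TT G x y u v ↔
    t ∈ trees G ∧ s(u, v) ∈ t ∧ ¬ (gr (t.erase s(u, v))).Reachable x y ∧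
    (gr (t.erase s(u, v))).Reachable v y := by
  classical
  simp [TT]

open Classical in
/-- the combinatorial harmonic potential: number of spanning trees containing `{x,y}`
in which `w` lies on the `y`-side after deleting `{x,y}` -/
noncomputable def phi (x y : V) (w : V) : ℝ :=
  ((trees G).filter (fun s => s(x, y) ∈ s ∧ (gr (s.erase s(x, y))).Reachable w y)).card

open Classical in
lemma card_swap {x y u v : V} (hxy : G.Adj x y) (huv : G.Adj u v) :
    ((trees G).filter (fun s => s(x, y) ∈ s ∧ (gr (s.erase s(x, y))).Reachable v y ∧
      ¬ (gr (s.erase s(x, y))).Reachable u y)).card = (TT G x y u v).card := by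
  refine Finset.card_bij' (fun s _ => insert s(u, v) (s.erase s(x, y)))
    (fun t _ => insert s(x, y) (t.erase s(u, v))) ?_ ?_ ?_ ?_
  · -- forward membership
    intro s hs
    rw [Finset.mem_filter] at hs
    obtain ⟨hst, he0, hvy, hnuy⟩ := hs
    have htree := isTree_of_mem_trees G hst
    have hadjxy : (gr s).Adj x y := gr_adj.mpr ⟨he0, hxy.ne⟩
    have hdich := reach_or_of_tree htree hadjxy
    have hnab := not_reach_erase htree.IsAcyclic hadjxy
    have hux : (gr (s.erase s(x, y))).Reachable u x := by
      rcases hdich u with h | h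
      · exact h
      · exact absurd h hnuy
    have hgne : s(u, v) ∉ s.erase s(x, y) := by
      intro h
      exact hnuy ((SimpleGraph.Adj.reachable (gr_adj.mpr ⟨h, huv.ne⟩)).trans hvy)
    have htree' : (gr (insert s(u, v) (s.erase s(x, y)))).IsTree :=
      isTree_insert hdich hnab (isAcyclic_of_subset (Finset.erase_subset _ _) htree.IsAcyclic)
        hux hvy
    rw [mem_TT]
    refine ⟨(mem_trees G).mpr ⟨?_, htree'⟩, Finset.mem_insert_self _ _, ?_, ?_⟩
    · intro e he
      rcases Finset.mem_insert.mp (by exact_mod_cast he) with h | h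
      · exact h ▸ (G.mem_edgeSet.mpr huv)
      · exact ((mem_trees G).mp hst).1 (Finset.mem_coe.mpr (Finset.mem_of_mem_erase h))
    · rw [Finset.erase_insert hgne]
      exact hnab
    · rw [Finset.erase_insert hgne]
      exact hvy
  · -- backward membership
    intro t ht
    rw [mem_TT] at ht
    obtain ⟨htt, hg, hnxy, hvy⟩ := ht
    have htree := isTree_of_mem_trees G htt
    have hadjuv : (gr t).Adj u v := gr_adj.mpr ⟨hg, huv.ne⟩
    have hdich := reach_or_of_tree htree hadjuv
    have hnuv := not_reach_erase htree.IsAcyclic hadjuv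
    have hxu : (gr (t.erase s(u, v))).Reachable x u := by
      rcases hdich x with h | h
      · exact h
      · exact absurd (h.trans hvy) hnxy
    have he0ne : s(x, y) ∉ t.erase s(u, v) := by
      intro h
      exact hnxy (SimpleGraph.Adj.reachable (gr_adj.mpr ⟨h, hxy.ne⟩))
    have htree' : (gr (insert s(x, y) (t.erase s(u, v)))).IsTree :=
      isTree_insert hdich hnuv (isAcyclic_of_subset (Finset.erase_subset _ _) htree.IsAcyclic)
        hxu hvy.symm
    rw [Finset.mem_filter]
    refine ⟨(mem_trees G).mpr ⟨?_, htree'⟩, Finset.mem_insert_self _ _, ?_, ?_⟩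
    · intro e he
      rcases Finset.mem_insert.mp (by exact_mod_cast he) with h | h
      · exact h ▸ (G.mem_edgeSet.mpr hxy)
      · exact ((mem_trees G).mp htt).1 (Finset.mem_coe.mpr (Finset.mem_of_mem_erase h))
    · rw [Finset.erase_insert he0ne]
      exact hvy
    · rw [Finset.erase_insert he0ne]
      intro h
      exact hnuv (h.trans hvy.symm)
  · -- left inverse
    intro s hs
    rw [Finset.mem_filter] at hs
    obtain ⟨hst, he0, hvy, hnuy⟩ := hs
    have hgne : s(u, v) ∉ s.erase s(x, y) := by
      intro h
      exact hnuy ((SimpleGraph.Adj.reachable (gr_adj.mpr ⟨h, huv.ne⟩)).trans hvy)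
    show insert s(x, y) ((insert s(u, v) (s.erase s(x, y))).erase s(u, v)) = s
    rw [Finset.erase_insert hgne, Finset.insert_erase he0]
  · -- right inverse
    intro t ht
    rw [mem_TT] at ht
    obtain ⟨htt, hg, hnxy, hvy⟩ := ht
    have he0ne : s(x, y) ∉ t.erase s(u, v) := by
      intro h
      exact hnxy (SimpleGraph.Adj.reachable (gr_adj.mpr ⟨h, hxy.ne⟩))
    show insert s(u, v) ((insert s(x, y) (t.erase s(u, v))).erase s(x, y)) = t
    rw [Finset.erase_insert he0ne, Finset.insert_erase hg]

lemma phi_sub {x y u v : V} (hxy : G.Adj x y) (huv : G.Adj u v) :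
    phi G x y v - phi G x y u = ((TT G x y u v).card : ℝ) - (TT G x y v u).card := by
  classical
  set A := (trees G).filter (fun s => s(x, y) ∈ s ∧ (gr (s.erase s(x, y))).Reachable v y) with hA
  set B := (trees G).filter (fun s => s(x, y) ∈ s ∧ (gr (s.erase s(x, y))).Reachable u y) with hB
  have hAB : A \ B = (trees G).filter (fun s => s(x, y) ∈ s ∧
      (gr (s.erase s(x, y))).Reachable v y ∧ ¬ (gr (s.erase s(x, y))).Reachable u y) := by
    ext s
    simp only [hA, hB, Finset.mem_sdiff, Finset.mem_filter]
    tauto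
  have hBA : B \ A = (trees G).filter (fun s => s(x, y) ∈ s ∧
      (gr (s.erase s(x, y))).Reachable u y ∧ ¬ (gr (s.erase s(x, y))).Reachable v y) := by
    ext s
    simp only [hA, hB, Finset.mem_sdiff, Finset.mem_filter]
    tauto
  have h1 : (A ∩ B).card + (A \ B).card = A.card := Finset.card_inter_add_card_sdiff A B
  have h2 : (B ∩ A).card + (B \ A).card = B.card := Finset.card_inter_add_card_sdiff B A
  have h3 : (A ∩ B) = (B ∩ A) := Finset.inter_comm A B
  have e1 : (A \ B).card = (TT G x y u v).card := by
    rw [hAB]; exact card_swap G hxy huv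
  have e2 : (B \ A).card = (TT G x y v u).card := by
    rw [hBA]
    have := card_swap G hxy huv.symm
    convert this using 3
  have hphiv : phi G x y v = (A.card : ℝ) := rfl
  have hphiu : phi G x y u = (B.card : ℝ) := rfl
  rw [hphiv, hphiu, ← e1, ← e2, ← h1, ← h2, h3]
  push_cast
  ring

open Classical in
noncomputable def D (t : Finset (Sym2 V)) (f : V → ℝ) (a b u v : V) : ℝ :=
  if s(u, v) ∈ t ∧ ¬ (gr (t.erase s(u, v))).Reachable a b ∧ (gr (t.erase s(u, v))).Reachable v b
  then f v - f u else 0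

noncomputable def cEdge (t : Finset (Sym2 V)) (f : V → ℝ) (a b : V) : Sym2 V → ℝ :=
  Sym2.lift ⟨fun u v => D t f a b u v + D t f a b v u, fun u v => add_comm _ _⟩

lemma cEdge_mk (t : Finset (Sym2 V)) (f : V → ℝ) (a b u v : V) :
    cEdge t f a b s(u, v) = D t f a b u v + D t f a b v u := rfl

lemma sum_cEdge_aux {t : Finset (Sym2 V)} (ht : t ⊆ G.edgeFinset)
    (htree : (gr t).IsTree) (f : V → ℝ) {a b : V} (p : (gr t).Walk a b) (hp : p.IsPath) :
    ∑ e ∈ G.edgeFinset, cEdge t f a b e = f b - f a := by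
  induction p with
  | nil =>
    rw [sub_self]
    refine Finset.sum_eq_zero fun e he => ?_
    induction e using Sym2.ind with
    | _ p q =>
      rw [cEdge_mk]
      simp only [D]
      rw [if_neg (fun h => h.2.1 (SimpleGraph.Reachable.refl _)),
        if_neg (fun h => h.2.1 (SimpleGraph.Reachable.refl _)), add_zero]
  | @cons a w b hadj q ih =>
    rw [SimpleGraph.Walk.cons_isPath_iff] at hp
    obtain ⟨hq, hanotin⟩ := hp
    have hg0t : s(a, w) ∈ t := (gr_adj.mp hadj).1
    have hanw : a ≠ w := hadj.ne
    have hqreach : (gr (t.erase s(a, w))).Reachable w b := by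
      have he : ∀ e ∈ q.edges, e ∈ (gr (t.erase s(a, w))).edgeSet := by
        intro e hee
        have h1 := q.edges_subset_edgeSet hee
        rw [SimpleGraph.edgeSet_fromEdgeSet] at h1 ⊢
        refine ⟨?_, h1.2⟩
        have het : e ∈ t := by exact_mod_cast h1.1
        have hne : e ≠ s(a, w) := by
          rintro rfl
          exact hanotin (q.fst_mem_support_of_mem_edges hee)
        exact_mod_cast Finset.mem_erase.mpr ⟨hne, het⟩
      exact ⟨q.transfer _ he⟩
    have hnab : ¬ (gr (t.erase s(a, w))).Reachable a b := by
      intro h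
      exact not_reach_erase htree.IsAcyclic hadj (h.trans hqreach.symm)
    have key : ∀ e ∈ G.edgeFinset,
        cEdge t f a b e - cEdge t f w b e = if e = s(a, w) then f w - f a else 0 := by
      intro e he
      by_cases heg : e = s(a, w)
      · subst heg
        rw [if_pos rfl, cEdge_mk, cEdge_mk]
        have hsw : s(w, a) = s(a, w) := Sym2.eq_swap
        simp only [D]
        rw [hsw]
        rw [if_pos ⟨hg0t, hnab, hqreach⟩, if_neg (fun h => h.2.1 h.2.2),
          if_neg (fun h => (h.2.1 hqreach : False)), if_neg (fun h => (h.2.1 hqreach : False))]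
        ring
      · rw [if_neg heg, sub_eq_zero]
        induction e using Sym2.ind with
        | _ p q =>
          rw [cEdge_mk, cEdge_mk]
          by_cases hmem : s(p, q) ∈ t
          · have hg0e : s(a, w) ∈ t.erase s(p, q) :=
              Finset.mem_erase.mpr ⟨fun h => heg h.symm, hg0t⟩
            have hreachaw : (gr (t.erase s(p, q))).Reachable a w :=
              SimpleGraph.Adj.reachable (gr_adj.mpr ⟨hg0e, hanw⟩)
            have hiff : (gr (t.erase s(p, q))).Reachable a b ↔
                (gr (t.erase s(p, q))).Reachable w b :=
              ⟨fun h => hreachaw.symm.trans h, fun h => hreachaw.trans h⟩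
            have hsw : s(q, p) = s(p, q) := Sym2.eq_swap
            simp only [D]
            rw [hsw]
            classical
            congr 1 <;> · apply if_congr _ rfl rfl; rw [hiff]
          · have hsw : s(q, p) = s(p, q) := Sym2.eq_swap
            simp only [D]
            rw [hsw]
            rw [if_neg (fun h => hmem h.1), if_neg (fun h => hmem h.1),
              if_neg (fun h => hmem h.1), if_neg (fun h => hmem h.1)]
    have hsum : ∑ e ∈ G.edgeFinset, (cEdge t f a b e - cEdge t f w b e) = f w - f a := by
      rw [Finset.sum_congr rfl key, Finset.sum_ite_eq' G.edgeFinset s(a, w) (fun _ => f w - f a),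
        if_pos (ht hg0t)]
    rw [Finset.sum_sub_distrib] at hsum
    have hihq := ih hq
    linarith

lemma sum_cEdge {t : Finset (Sym2 V)} (ht : t ⊆ G.edgeFinset)
    (htree : (gr t).IsTree) (f : V → ℝ) (a b : V) :
    ∑ e ∈ G.edgeFinset, cEdge t f a b e = f b - f a := by
  obtain ⟨w⟩ := htree.isConnected.preconnected a b
  exact sum_cEdge_aux G ht htree f w.toPath.1 w.toPath.2

open Classical in
noncomputable def Ncnt (e : Sym2 V) : ℕ := ((trees G).filter (fun s => e ∈ s)).card

lemma trees_subset_edgeFinset {s : Finset (Sym2 V)} (hs : s ∈ trees G) : s ⊆ G.edgeFinset :=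
  fun e he => SimpleGraph.mem_edgeFinset.mpr (((mem_trees G).mp hs).1 he)

lemma phi_y {x y : V} : phi G x y y = (Ncnt G s(x, y) : ℝ) := by
  classical
  unfold phi Ncnt
  norm_cast
  congr 1
  apply Finset.filter_congr
  intro s hs
  simp [and_iff_left_iff_imp]

lemma phi_x {x y : V} (hxy : G.Adj x y) : phi G x y x = 0 := by
  classical
  unfold phi
  rw [Finset.filter_false_of_mem, Finset.card_empty]
  · norm_num
  · intro s hs
    rintro ⟨he0, hre⟩
    exact not_reach_erase (isTree_of_mem_trees G hs).IsAcyclic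
      (gr_adj.mpr ⟨he0, hxy.ne⟩) hre

/-- the square-difference edge weight of a potential -/
noncomputable def sqd (f : V → ℝ) : Sym2 V → ℝ :=
  Sym2.lift ⟨fun u v => (f v - f u) ^ 2, fun u v => by ring⟩

/-- the absolute-difference edge weight of a potential -/
noncomputable def absd (f : V → ℝ) : Sym2 V → ℝ :=
  Sym2.lift ⟨fun u v => |f v - f u|, fun u v => abs_sub_comm _ _⟩

/-- helper for indicator algebra -/
lemma ite_alg (P Q : Prop) [Decidable P] [Decidable Q] (r : ℝ) :
    (if P then r else 0) + (if Q then -r else 0)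
      = r * ((if P then (1 : ℝ) else 0) - if Q then (1 : ℝ) else 0) := by
  by_cases hP : P <;> by_cases hQ : Q <;> simp [hP, hQ]

/-- THE ENERGY IDENTITY (combinatorial Kirchhoff/Thomson):
the Dirichlet energy of the tree-counting potential equals `N * N_e`. -/
lemma energy {x y : V} (hxy : G.Adj x y) :
    ∑ e ∈ G.edgeFinset, sqd (phi G x y) e
      = ((trees G).card : ℝ) * (Ncnt G s(x, y) : ℝ) := by
  classical
  have step1 : ∀ e ∈ G.edgeFinset,
      sqd (phi G x y) e = ∑ t ∈ trees G, cEdge t (phi G x y) x y e := by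
    intro e he
    induction e using Sym2.ind with
    | _ u v =>
      have huv : G.Adj u v := G.mem_edgeSet.mp (SimpleGraph.mem_edgeFinset.mp he)
      have hre : ∀ t ∈ trees G, cEdge t (phi G x y) x y s(u, v)
          = (phi G x y v - phi G x y u) *
            ((if s(u, v) ∈ t ∧ ¬ (gr (t.erase s(u, v))).Reachable x y ∧
                (gr (t.erase s(u, v))).Reachable v y then (1 : ℝ) else 0)
             - if s(v, u) ∈ t ∧ ¬ (gr (t.erase s(v, u))).Reachable x y ∧
                (gr (t.erase s(v, u))).Reachable u y then (1 : ℝ) else 0) := by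
        intro t _
        rw [cEdge_mk]
        simp only [D]
        rw [show phi G x y u - phi G x y v = -(phi G x y v - phi G x y u) by ring]
        exact ite_alg _ _ _
      have hcard1 : ∑ t ∈ trees G, (if s(u, v) ∈ t ∧ ¬ (gr (t.erase s(u, v))).Reachable x y ∧
            (gr (t.erase s(u, v))).Reachable v y then (1 : ℝ) else 0)
          = ((TT G x y u v).card : ℝ) := by
        rw [Finset.sum_boole]
        unfold TT
        norm_num
      have hcard2 : ∑ t ∈ trees G, (if s(v, u) ∈ t ∧ ¬ (gr (t.erase s(v, u))).Reachable x y ∧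
            (gr (t.erase s(v, u))).Reachable u y then (1 : ℝ) else 0)
          = ((TT G x y v u).card : ℝ) := by
        rw [Finset.sum_boole]
        unfold TT
        norm_num
      rw [Finset.sum_congr rfl hre, ← Finset.mul_sum, Finset.sum_sub_distrib, hcard1, hcard2,
        ← phi_sub G hxy huv]
      show (phi G x y v - phi G x y u) ^ 2 = _
      ring
  rw [Finset.sum_congr rfl step1, Finset.sum_comm]
  have step2 : ∀ t ∈ trees G, ∑ e ∈ G.edgeFinset, cEdge t (phi G x y) x y e
      = (Ncnt G s(x, y) : ℝ) := by
    intro t ht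
    rw [sum_cEdge G (trees_subset_edgeFinset G ht) (isTree_of_mem_trees G ht),
      phi_y G, phi_x G hxy, sub_zero]
  rw [Finset.sum_congr rfl step2, Finset.sum_const, nsmul_eq_mul]

/-- telescoping a potential along the darts of a walk -/
lemma dart_telescope (H : SimpleGraph V) (f : V → ℝ) {a b : V} (w : H.Walk a b) :
    ((w.darts).map (fun d => f d.snd - f d.fst)).sum = f b - f a := by
  induction w with
  | nil => simp
  | cons h q ih =>
    rw [SimpleGraph.Walk.darts_cons, List.map_cons, List.sum_cons, ih]
    ring_nf

/-- the usage-weighted sum over the edge set is the sum along the walk -/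
lemma walk_sum (ρ : Sym2 V → ℝ) {a b : V} (w : G.Walk a b) :
    ∑ e ∈ G.edgeFinset, (w.edges.count e : ℝ) * ρ e = ((w.edges).map ρ).sum := by
  classical
  rw [Finset.sum_list_map_count, eq_comm]
  apply Finset.sum_subset_zero_on_sdiff
  · intro e hee
    exact SimpleGraph.mem_edgeFinset.mpr (w.edges_subset_edgeSet (List.mem_toFinset.mp hee))
  · intro e hee
    rw [Finset.mem_sdiff] at hee
    rw [List.count_eq_zero_of_not_mem (fun h => hee.2 (List.mem_toFinset.mpr h))]
    simp
  · intro e _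
    rw [nsmul_eq_mul]

lemma mod2Connecting_bddBelow (x y : V) : BddBelow {t : ℝ | ∃ ρ : Sym2 V → ℝ,
    (∀ e, 0 ≤ ρ e) ∧ (∀ w : G.Walk x y, 1 ≤ ∑ e ∈ G.edgeFinset, (w.edges.count e : ℝ) * ρ e) ∧
    t = ∑ e ∈ G.edgeFinset, ρ e ^ 2} := by
  refine ⟨0, fun τ hτ => ?_⟩
  obtain ⟨ρ, h0, hadm, rfl⟩ := hτ
  exact Finset.sum_nonneg fun e _ => sq_nonneg _

lemma one_le_mod2Connecting {x y : V} (hxy : G.Adj x y) : 1 ≤ mod2Connecting G x y := by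
  unfold mod2Connecting
  apply le_csInf
  · refine ⟨∑ e ∈ G.edgeFinset, (1 : ℝ) ^ 2, fun _ => 1, fun _ => zero_le_one, fun w => ?_, rfl⟩
    rw [walk_sum]
    have hlen : ((w.edges.map (fun _ => (1 : ℝ))).sum) = (w.edges.length : ℝ) := by
      rw [List.map_const', List.sum_replicate, nsmul_eq_mul, mul_one]
    rw [hlen, SimpleGraph.Walk.length_edges]
    have : w.length ≠ 0 := by
      intro h
      exact hxy.ne (SimpleGraph.Walk.eq_of_length_eq_zero h)
    exact_mod_cast Nat.one_le_iff_ne_zero.mpr this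
  · rintro τ ⟨ρ, h0, hadm, rfl⟩
    have hw0 := hadm (SimpleGraph.Walk.cons hxy SimpleGraph.Walk.nil)
    rw [walk_sum] at hw0
    simp only [SimpleGraph.Walk.edges_cons, SimpleGraph.Walk.edges_nil, List.map_cons,
      List.map_nil, List.sum_cons, List.sum_nil, add_zero] at hw0
    have hmem : s(x, y) ∈ G.edgeFinset := SimpleGraph.mem_edgeFinset.mpr hxy
    calc (1 : ℝ) ≤ ρ s(x, y) ^ 2 := by nlinarith
    _ ≤ ∑ e ∈ G.edgeFinset, ρ e ^ 2 :=
        Finset.single_le_sum (fun e _ => sq_nonneg (ρ e)) hmem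

lemma mod2Connecting_le {x y : V} (hxy : G.Adj x y) (hpos : 0 < Ncnt G s(x, y)) :
    mod2Connecting G x y ≤ ((trees G).card : ℝ) / (Ncnt G s(x, y) : ℝ) := by
  classical
  have hNe : (0 : ℝ) < (Ncnt G s(x, y) : ℝ) := by exact_mod_cast hpos
  set f := phi G x y with hf
  have hρnn : ∀ e, 0 ≤ ((Ncnt G s(x, y) : ℝ))⁻¹ * absd f e := by
    intro e
    induction e using Sym2.ind with
    | _ u v => exact mul_nonneg (inv_nonneg.mpr hNe.le) (abs_nonneg _)
  have hadm : ∀ w : G.Walk x y, 1 ≤ ∑ e ∈ G.edgeFinset,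
      (w.edges.count e : ℝ) * (((Ncnt G s(x, y) : ℝ))⁻¹ * absd f e) := by
    intro w
    rw [walk_sum]
    have hsum : (w.darts.map (fun d => f d.snd - f d.fst)).sum
        ≤ (w.darts.map (fun d => absd f d.edge)).sum := by
      apply List.sum_le_sum
      intro d _
      exact le_abs_self _
    rw [dart_telescope G f w, hf, phi_y G, phi_x G hxy, sub_zero, ← hf] at hsum
    have hmap : (w.edges.map (fun e => ((Ncnt G s(x, y) : ℝ))⁻¹ * absd f e)).sum
        = ((Ncnt G s(x, y) : ℝ))⁻¹ * (w.darts.map (fun d => absd f d.edge)).sum := by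
      show ((w.darts.map SimpleGraph.Dart.edge).map
        (fun e => ((Ncnt G s(x, y) : ℝ))⁻¹ * absd f e)).sum = _
      rw [List.map_map, ← List.sum_map_mul_left]
      rfl
    rw [hmap]
    have h1 : (1 : ℝ) = ((Ncnt G s(x, y) : ℝ))⁻¹ * (Ncnt G s(x, y) : ℝ) := by
      field_simp
    rw [h1]
    exact mul_le_mul_of_nonneg_left hsum (inv_nonneg.mpr hNe.le)
  refine csInf_le (mod2Connecting_bddBelow G x y) ?_
  refine ⟨fun e => ((Ncnt G s(x, y) : ℝ))⁻¹ * absd f e, hρnn, hadm, ?_⟩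
  have hsq : ∀ e ∈ G.edgeFinset, (((Ncnt G s(x, y) : ℝ))⁻¹ * absd f e) ^ 2
      = ((Ncnt G s(x, y) : ℝ))⁻¹ ^ 2 * sqd f e := by
    intro e _
    induction e using Sym2.ind with
    | _ u v =>
      show (((Ncnt G s(x, y) : ℝ))⁻¹ * |f v - f u|) ^ 2 = _
      rw [mul_pow, sq_abs]
      rfl
  rw [Finset.sum_congr rfl hsq, ← Finset.mul_sum, hf, energy G hxy]
  field_simp

/-- every connected graph has a spanning tree -/
lemma exists_spanning_tree (hconn : G.Connected) : ∃ s, s ∈ trees G := by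
  classical
  have hne : (G.edgeFinset.powerset.filter (fun s => (gr s).Connected)).Nonempty := by
    refine ⟨G.edgeFinset, ?_⟩
    rw [Finset.mem_filter, Finset.mem_powerset]
    refine ⟨subset_rfl, ?_⟩
    have hcoe : ((G.edgeFinset : Finset (Sym2 V)) : Set (Sym2 V)) = G.edgeSet :=
      G.coe_edgeFinset
    show (SimpleGraph.fromEdgeSet ((G.edgeFinset : Finset (Sym2 V)) : Set (Sym2 V))).Connected
    rw [hcoe, SimpleGraph.fromEdgeSet_edgeSet]
    exact hconn
  obtain ⟨s, hs, hmin⟩ := Finset.exists_min_image _ Finset.card hne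
  rw [Finset.mem_filter, Finset.mem_powerset] at hs
  obtain ⟨hsub, hsconn⟩ := hs
  refine ⟨s, (mem_trees G).mpr ⟨?_, ⟨hsconn, ?_⟩⟩⟩
  · intro e he
    exact SimpleGraph.mem_edgeFinset.mp (hsub (by exact_mod_cast he))
  · by_contra hac
    unfold SimpleGraph.IsAcyclic at hac
    push_neg at hac
    obtain ⟨w0, c, hc⟩ := hac
    have hlen : 0 < c.edges.length := by
      rw [SimpleGraph.Walk.length_edges]
      have := hc.three_le_length
      omega
    obtain ⟨e, hee⟩ := List.exists_mem_of_length_pos hlen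
    have heset := c.edges_subset_edgeSet hee
    rw [SimpleGraph.edgeSet_fromEdgeSet] at heset
    have hes : e ∈ s := by exact_mod_cast heset.1
    revert hee
    induction e using Sym2.ind with
    | _ u v =>
      intro hee
      have huv : (gr s).Adj u v := gr_adj.mpr ⟨hes, fun h => heset.2 (by rw [h]; rfl)⟩
      -- the edge lies on a cycle, hence is not a bridge
      have hnb : ¬ (gr s).IsBridge s(u, v) := by
        intro hb'
        exact hb'.notMem_edges_of_isCycle hc hee
      rw [SimpleGraph.isBridge_iff] at hnb
      push_neg at hnb
      have hreach := hnb
      have hle : (gr s) \ SimpleGraph.fromEdgeSet {s(u, v)} ≤ gr (s.erase s(u, v)) := by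
        intro a b hab
        rw [SimpleGraph.sdiff_adj] at hab
        obtain ⟨h1, h2⟩ := hab
        rcases gr_adj.mp h1 with ⟨hm, hne⟩
        refine gr_adj.mpr ⟨Finset.mem_erase.mpr ⟨?_, hm⟩, hne⟩
        intro heq
        exact h2 ((SimpleGraph.fromEdgeSet_adj _).mpr ⟨Set.mem_singleton_iff.mpr heq, hne⟩)
      have huvE : (gr (s.erase s(u, v))).Reachable u v := hreach.mono hle
      have hconnE : (gr (s.erase s(u, v))).Connected := by
        rw [SimpleGraph.connected_iff]
        refine ⟨?_, hsconn.nonempty⟩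
        intro a b
        rcases reach_delete (u := u) (v := v) (hsconn.preconnected a b) with
          h | ⟨h1, h2⟩ | ⟨h1, h2⟩
        · exact h
        · exact (h1.trans huvE).trans h2
        · exact (h1.trans huvE.symm).trans h2
      have hmem : s.erase s(u, v) ∈ G.edgeFinset.powerset.filter (fun s => (gr s).Connected) := by
        rw [Finset.mem_filter, Finset.mem_powerset]
        exact ⟨(Finset.erase_subset _ _).trans hsub, hconnE⟩
      have := hmin _ hmem
      have hlt := Finset.card_erase_lt_of_mem hes
      omega


end Stmt19Aux

open Stmt19Aux in
/-- Spanning tree modulus lower bound: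
`Mod₂(Γ_spt)⁻¹ ≤ ∑ₑ R_eff(e)²`, where `R_eff(e)` is the effective resistance
across edge `e`. -/
theorem stmt19 {V : Type*} [Fintype V] [DecidableEq V]
    (G : SimpleGraph V) [DecidableRel G.Adj] (hconn : G.Connected)
    (Reff : Sym2 V → ℝ)
    (hReff : ∀ x y : V, G.Adj x y → Reff s(x, y) = (mod2Connecting G x y)⁻¹) :
    (mod2SpanningTrees G)⁻¹ ≤ ∑ e ∈ G.edgeFinset, Reff e ^ 2 := by
  classical
  by_cases hE : G.edgeFinset = ∅
  · -- no edges: `∅` is a spanning tree, so there is no admissible density at all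
    have hGbot : G = ⊥ := by
      rw [← SimpleGraph.edgeSet_eq_empty, ← G.coe_edgeFinset, hE]
      simp
    have hsub : ∀ a b : V, a = b := by
      intro a b
      have h := hconn.preconnected a b
      rw [hGbot] at h
      exact SimpleGraph.reachable_bot.mp h
    have hstree : IsSpanningTreeEdges G (∅ : Finset (Sym2 V)) := by
      constructor
      · simp
      · have hb : SimpleGraph.fromEdgeSet ((∅ : Finset (Sym2 V)) : Set (Sym2 V))
            = (⊥ : SimpleGraph V) := by
          rw [Finset.coe_empty, SimpleGraph.fromEdgeSet_empty]
        rw [hb]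
        constructor
        · rw [SimpleGraph.connected_iff]
          exact ⟨fun a b => (hsub a b) ▸ SimpleGraph.Reachable.refl a, hconn.nonempty⟩
        · exact SimpleGraph.isAcyclic_bot
    have hempty : {t : ℝ | ∃ ρ : Sym2 V → ℝ, (∀ e, 0 ≤ ρ e) ∧
        (∀ s : Finset (Sym2 V), IsSpanningTreeEdges G s → 1 ≤ ∑ e ∈ s, ρ e) ∧
        t = ∑ e ∈ G.edgeFinset, ρ e ^ 2} = ∅ := by
      ext τ
      simp only [Set.mem_setOf_eq, Set.mem_empty_iff_false, iff_false]
      rintro ⟨ρ, h0, hadm, rfl⟩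
      have h1 := hadm ∅ hstree
      simp at h1
      linarith
    rw [mod2SpanningTrees, hempty, Real.sInf_empty, inv_zero, hE]
    simp
  · obtain ⟨T0, hT0⟩ := exists_spanning_tree G hconn
    have hNpos : (0 : ℝ) < ((trees G).card : ℝ) := by
      exact_mod_cast Finset.card_pos.mpr ⟨T0, hT0⟩
    have hq0 : ∀ e, 0 ≤ (Ncnt G e : ℝ) / ((trees G).card : ℝ) :=
      fun e => div_nonneg (Nat.cast_nonneg _) hNpos.le
    have hqReff : ∀ e ∈ G.edgeFinset, (Ncnt G e : ℝ) / ((trees G).card : ℝ) ≤ Reff e := by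
      intro e he
      induction e using Sym2.ind with
      | _ u v =>
        have huv : G.Adj u v := G.mem_edgeSet.mp (SimpleGraph.mem_edgeFinset.mp he)
        rw [hReff u v huv]
        by_cases hz : Ncnt G s(u, v) = 0
        · rw [hz]
          norm_num
          exact le_trans zero_le_one (one_le_mod2Connecting G huv)
        · have hpos : 0 < Ncnt G s(u, v) := Nat.pos_of_ne_zero hz
          have h1 := one_le_mod2Connecting G huv
          have h2 := mod2Connecting_le G huv hpos
          have hcpos : (0 : ℝ) < mod2Connecting G u v := lt_of_lt_of_le one_pos h1
          have h3 : (((trees G).card : ℝ) / (Ncnt G s(u, v) : ℝ))⁻¹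
              ≤ (mod2Connecting G u v)⁻¹ := inv_anti₀ hcpos h2
          rw [inv_div] at h3
          exact h3
    have hsum_q_le : ∑ e ∈ G.edgeFinset, ((Ncnt G e : ℝ) / ((trees G).card : ℝ)) ^ 2
        ≤ ∑ e ∈ G.edgeFinset, Reff e ^ 2 :=
      Finset.sum_le_sum fun e he => pow_le_pow_left₀ (hq0 e) (hqReff e he) 2
    obtain ⟨e1, he1E, he1pos⟩ : ∃ e1 ∈ G.edgeFinset, 0 < Ncnt G e1 := by
      obtain ⟨e, heE⟩ := Finset.nonempty_iff_ne_empty.mpr hE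
      revert heE
      induction e using Sym2.ind with
      | _ a b =>
        intro heE
        have hab : G.Adj a b := G.mem_edgeSet.mp (SimpleGraph.mem_edgeFinset.mp heE)
        obtain ⟨w⟩ := (isTree_of_mem_trees G hT0).isConnected.preconnected a b
        have hlen : 0 < w.edges.length := by
          rw [SimpleGraph.Walk.length_edges]
          rcases Nat.eq_zero_or_pos w.length with h | h
          · exact absurd (SimpleGraph.Walk.eq_of_length_eq_zero h) hab.ne
          · exact h
        obtain ⟨e1, he1⟩ := List.exists_mem_of_length_pos hlen
        have h1 := w.edges_subset_edgeSet he1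
        rw [SimpleGraph.edgeSet_fromEdgeSet] at h1
        have he1T : e1 ∈ T0 := by exact_mod_cast h1.1
        refine ⟨e1, trees_subset_edgeFinset G hT0 he1T, Finset.card_pos.mpr ⟨T0, ?_⟩⟩
        rw [Finset.mem_filter]
        exact ⟨hT0, he1T⟩
    have hqpos : 0 < ∑ e ∈ G.edgeFinset, ((Ncnt G e : ℝ) / ((trees G).card : ℝ)) ^ 2 := by
      refine Finset.sum_pos' (fun e _ => sq_nonneg _) ⟨e1, he1E, ?_⟩
      have hpos1 : 0 < (Ncnt G e1 : ℝ) / ((trees G).card : ℝ) :=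
        div_pos (by exact_mod_cast he1pos) hNpos
      positivity
    have hSpos : 0 < ∑ e ∈ G.edgeFinset, Reff e ^ 2 := lt_of_lt_of_le hqpos hsum_q_le
    have hbound : ∀ τ ∈ {t : ℝ | ∃ ρ : Sym2 V → ℝ, (∀ e, 0 ≤ ρ e) ∧
        (∀ s : Finset (Sym2 V), IsSpanningTreeEdges G s → 1 ≤ ∑ e ∈ s, ρ e) ∧
        t = ∑ e ∈ G.edgeFinset, ρ e ^ 2},
        (∑ e ∈ G.edgeFinset, Reff e ^ 2)⁻¹ ≤ τ := by
      rintro τ ⟨ρ, hρ0, hadm, rfl⟩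
      have hcard : ((trees G).card : ℝ) ≤ ∑ s ∈ trees G, ∑ e ∈ s, ρ e := by
        have h1 : ∀ s ∈ trees G, (1 : ℝ) ≤ ∑ e ∈ s, ρ e :=
          fun s hs => hadm s ((mem_trees G).mp hs)
        calc ((trees G).card : ℝ) = ∑ _s ∈ trees G, (1 : ℝ) := by
              rw [Finset.sum_const, nsmul_eq_mul, mul_one]
        _ ≤ _ := Finset.sum_le_sum h1
      have hswap : ∑ s ∈ trees G, ∑ e ∈ s, ρ e
          = ∑ e ∈ G.edgeFinset, (Ncnt G e : ℝ) * ρ e := by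
        have hinner : ∀ s ∈ trees G, ∑ e ∈ s, ρ e
            = ∑ e ∈ G.edgeFinset, (if e ∈ s then ρ e else 0) := by
          intro s hs
          rw [Finset.sum_ite_mem,
            Finset.inter_eq_right.mpr (trees_subset_edgeFinset G hs)]
        rw [Finset.sum_congr rfl hinner, Finset.sum_comm]
        refine Finset.sum_congr rfl fun e he => ?_
        have hmul : ∑ s ∈ trees G, (if e ∈ s then ρ e else 0)
            = ρ e * ∑ s ∈ trees G, (if e ∈ s then (1 : ℝ) else 0) := by
          rw [Finset.mul_sum]
          refine Finset.sum_congr rfl fun s _ => ?_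
          rw [mul_ite, mul_one, mul_zero]
        rw [hmul, Finset.sum_boole, mul_comm]
        norm_num [Ncnt]
      have h1N : 1 ≤ ∑ e ∈ G.edgeFinset, ((Ncnt G e : ℝ) / ((trees G).card : ℝ)) * ρ e := by
        have hdiv : ∑ e ∈ G.edgeFinset, ((Ncnt G e : ℝ) / ((trees G).card : ℝ)) * ρ e
            = (∑ e ∈ G.edgeFinset, (Ncnt G e : ℝ) * ρ e) / ((trees G).card : ℝ) := by
          rw [Finset.sum_div]
          refine Finset.sum_congr rfl fun e _ => ?_
          ring
        rw [hdiv, le_div_iff₀ hNpos, one_mul, ← hswap]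
        exact hcard
      have hCS := Finset.sum_mul_sq_le_sq_mul_sq G.edgeFinset
        (fun e => (Ncnt G e : ℝ) / ((trees G).card : ℝ)) ρ
      have hτ0 : 0 ≤ ∑ e ∈ G.edgeFinset, ρ e ^ 2 :=
        Finset.sum_nonneg fun e _ => sq_nonneg _
      have h1' : 1 ≤ (∑ e ∈ G.edgeFinset, ((Ncnt G e : ℝ) / ((trees G).card : ℝ)) ^ 2)
          * (∑ e ∈ G.edgeFinset, ρ e ^ 2) := by nlinarith
      have h2' : 1 ≤ (∑ e ∈ G.edgeFinset, Reff e ^ 2) * (∑ e ∈ G.edgeFinset, ρ e ^ 2) :=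
        le_trans h1' (mul_le_mul_of_nonneg_right hsum_q_le hτ0)
      rw [inv_eq_one_div, div_le_iff₀ hSpos]
      nlinarith
    by_cases hne : {t : ℝ | ∃ ρ : Sym2 V → ℝ, (∀ e, 0 ≤ ρ e) ∧
        (∀ s : Finset (Sym2 V), IsSpanningTreeEdges G s → 1 ≤ ∑ e ∈ s, ρ e) ∧
        t = ∑ e ∈ G.edgeFinset, ρ e ^ 2}.Nonempty
    · have hInf : (∑ e ∈ G.edgeFinset, Reff e ^ 2)⁻¹ ≤ mod2SpanningTrees G :=
        le_csInf hne hbound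
      have h4 := inv_anti₀ (inv_pos.mpr hSpos) hInf
      rwa [inv_inv] at h4
    · rw [mod2SpanningTrees, Set.not_nonempty_iff_eq_empty.mp hne, Real.sInf_empty, inv_zero]
      exact hSpos.le
end
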